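/- arXiv:1806.06256 — 5 statements merged into one kernel-verified Lean document; each statement's English description precedes it below -/
import Mathlib

section
/- If z_1, ..., z_n are distinct infinite binary words with radix sort tree having leaves y_1, ..., y_n (indexed so that y_i is a prefix of z_i), then for any permutation σ of {1,...,n}, the sequence z_{σ(1)}, ..., z_{σ(n)} is increasing in the lexicographic order if and only if y_{σ(1)}, ..., y_{σ(n)} is increasing in the lexicographic order. -/
/-- The finite word `u` is a prefix of the infinite word `z`. -/
def IsPrefInf (u : List Bool) (z : ℕ → Bool) : Prop :=
  ∀ i : Fin u.length, u.get i = z i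

/-- Strict lexicographic order on infinite binary words (with `false < true`). -/
def InfLex (z z' : ℕ → Bool) : Prop :=
  ∃ k : ℕ, (∀ i < k, z i = z' i) ∧ z k = false ∧ z' k = true

lemma prefInf_trans {u v : List Bool} {z : ℕ → Bool} (h : u <+: v)
    (hv : IsPrefInf v z) : IsPrefInf u z := by
  intro i
  have hlen : (i : ℕ) < v.length := lt_of_lt_of_le i.2 h.length_le
  have := hv ⟨i, hlen⟩
  simp only [List.get_eq_getElem] at this ⊢
  rw [← this]
  exact List.IsPrefix.getElem h i.2

lemma key_lemma (u v : List Bool) (zu zv : ℕ → Bool)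
    (hu : IsPrefInf u zu) (hv : IsPrefInf v zv)
    (h1 : ¬ u <+: v) (h2 : ¬ v <+: u) :
    (InfLex zu zv ↔ List.Lex (· < ·) u v) := by
  induction u generalizing v zu zv with
  | nil => exact absurd (List.nil_prefix) h1
  | cons a u' ih =>
    cases v with
    | nil => exact absurd (List.nil_prefix) h2
    | cons b v' =>
      have ha : zu 0 = a := (hu ⟨0, Nat.succ_pos _⟩).symm
      have hb : zv 0 = b := (hv ⟨0, Nat.succ_pos _⟩).symm
      by_cases hab : a = b
      · subst hab
        have h1' : ¬ u' <+: v' := fun h => h1 (List.cons_prefix_cons.mpr ⟨rfl, h⟩)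
        have h2' : ¬ v' <+: u' := fun h => h2 (List.cons_prefix_cons.mpr ⟨rfl, h⟩)
        have hu' : IsPrefInf u' (fun n => zu (n + 1)) := by
          intro i
          exact hu ⟨i + 1, Nat.succ_lt_succ i.2⟩
        have hv' : IsPrefInf v' (fun n => zv (n + 1)) := by
          intro i
          exact hv ⟨i + 1, Nat.succ_lt_succ i.2⟩
        have hiff := ih v' (fun n => zu (n + 1)) (fun n => zv (n + 1)) hu' hv' h1' h2'
        rw [List.lex_cons_iff, ← hiff]
        constructor
        · rintro ⟨k, hk, hk0, hk1⟩
          match k with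
          | 0 =>
            rw [ha] at hk0; rw [hb] at hk1
            exact absurd (hk0.symm.trans hk1) (by simp)
          | k + 1 =>
            exact ⟨k, fun i hi => hk (i + 1) (Nat.succ_lt_succ hi), hk0, hk1⟩
        · rintro ⟨k, hk, hk0, hk1⟩
          refine ⟨k + 1, fun i hi => ?_, hk0, hk1⟩
          match i with
          | 0 => rw [ha, hb]
          | i + 1 => exact hk i (Nat.lt_of_succ_lt_succ hi)
      · -- a ≠ b
        match a, b, hab with
        | false, true, _ =>
          constructor
          · intro _; exact List.Lex.rel (by simp [Bool.lt_iff])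
          · intro _; exact ⟨0, fun i hi => absurd hi (Nat.not_lt_zero i), ha, hb⟩
        | true, false, _ =>
          constructor
          · rintro ⟨k, hk, hk0, hk1⟩
            match k with
            | 0 => rw [ha] at hk0; exact absurd hk0 (by simp)
            | k + 1 =>
              have := hk 0 (Nat.succ_pos _)
              rw [ha, hb] at this
              exact absurd this (by simp)
          · intro h
            rcases h with _ | h
            · exact absurd ‹(true : Bool) < false› (by simp [Bool.lt_iff])
        | true, true, h => exact absurd rfl h
        | false, false, h => exact absurd rfl h

/-- If `y i` is the minimal distinguishing prefix of `z i`, then for any permutation `σ`,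
the sequence `z ∘ σ` is increasing in the lexicographic order iff `y ∘ σ` is. -/
theorem lex_order_iff {n : ℕ}
    (z : Fin n → ℕ → Bool) (hz : Function.Injective z)
    (y : Fin n → List Bool)
    (hpref : ∀ i, IsPrefInf (y i) (z i))
    (hdist : ∀ i j, j ≠ i → ¬ IsPrefInf (y i) (z j))
    (hmin : ∀ i, ∀ u : List Bool, IsPrefInf u (z i) →
      (∀ j, j ≠ i → ¬ IsPrefInf u (z j)) → (y i).length ≤ u.length)
    (σ : Equiv.Perm (Fin n)) :
    (∀ a b : Fin n, a < b → InfLex (z (σ a)) (z (σ b))) ↔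
      (∀ a b : Fin n, a < b → List.Lex (· < ·) (y (σ a)) (y (σ b))) := by
  have main : ∀ i j : Fin n, i ≠ j → (InfLex (z i) (z j) ↔ List.Lex (· < ·) (y i) (y j)) := by
    intro i j hij
    refine key_lemma (y i) (y j) (z i) (z j) (hpref i) (hpref j) ?_ ?_
    · intro h
      exact hdist i j hij.symm (prefInf_trans h (hpref j))
    · intro h
      exact hdist j i hij (prefInf_trans h (hpref i))
  constructor
  · intro h a b hab
    have hne : σ a ≠ σ b := fun he => absurd (σ.injective he) hab.ne
    exact (main _ _ hne).mp (h a b hab)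
  · intro h a b hab
    have hne : σ a ≠ σ b := fun he => absurd (σ.injective he) hab.ne
    exact (main _ _ hne).mpr (h a b hab)
end

section
/- A binary tree s with at least two leaves arises as a radix sort tree (i.e., all its leaves are pairwise prefix-incomparable minimal distinguishing prefixes) if and only if for every leaf u_1...u_p of s, the word u_1...u_{p-1} ū_p (obtained by flipping the last bit) is also a vertex of s. -/
/-- A set of finite binary words is prefix-closed. -/
def PrefixClosed (t : Set (List Bool)) : Prop :=
  ∀ v ∈ t, ∀ u : List Bool, u <+: v → u ∈ t

/-- `v` is a leaf of the finite tree `t`: it belongs to `t` and has no proper extension in `t`. -/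
def IsTreeLeaf (t : Finset (List Bool)) (v : List Bool) : Prop :=
  v ∈ t ∧ ∀ w ∈ t, v <+: w → w = v

/-- The number of leaves of a finite tree. -/
def leafCount (t : Finset (List Bool)) : ℕ :=
  (t.filter fun v => ∀ w ∈ t, v <+: w → w = v).card

/-- A full binary tree: nonempty, prefix-closed, and every non-leaf vertex has both children. -/
def FullBinTree (t : Finset (List Bool)) : Prop :=
  t.Nonempty ∧ PrefixClosed ↑t ∧
    ∀ v ∈ t, (v ++ [false] ∈ t ∨ v ++ [true] ∈ t) →
      (v ++ [false] ∈ t ∧ v ++ [true] ∈ t)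
/-- The radix sort tree determined by the distinct infinite binary words `z 0, ..., z (n-1)`:
the prefix closure of the minimal distinguishing prefixes `y i`.  A word `u` belongs to it
iff `u` is a prefix of some `z i` and either `u` is empty or its parent `u.dropLast` fails
to distinguish `z i` from all other inputs (equivalently, `u` is a prefix of `y i`). -/
def RTree {n : ℕ} (z : Fin n → ℕ → Bool) : Set (List Bool) :=
  {u | ∃ i, IsPrefInf u (z i) ∧
    (u = [] ∨ ∃ j, j ≠ i ∧ IsPrefInf u.dropLast (z j))}

lemma isPrefInf_iff {u : List Bool} {z : ℕ → Bool} :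
    IsPrefInf u z ↔ ∀ k, (h : k < u.length) → u[k] = z k := by
  constructor
  · intro h k hk; exact h ⟨k, hk⟩
  · intro h i; exact h i i.isLt

lemma isPrefInf_of_prefix {u v : List Bool} {z : ℕ → Bool} (huv : u <+: v)
    (hv : IsPrefInf v z) : IsPrefInf u z := by
  rw [isPrefInf_iff] at *
  intro k hk
  rw [huv.getElem hk]
  exact hv k (lt_of_lt_of_le hk huv.length_le)

/-- Pad a finite word with `false`s to an infinite word. -/
def pad (v : List Bool) : ℕ → Bool := fun k => v.getD k false

lemma isPrefInf_pad {u v : List Bool} (h : u <+: v) : IsPrefInf u (pad v) := by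
  rw [isPrefInf_iff]
  intro k hk
  have hk' : k < v.length := lt_of_lt_of_le hk h.length_le
  rw [h.getElem hk, pad, List.getD_eq_getElem _ _ hk']

lemma prefix_of_isPrefInf_pad {u v : List Bool} (hlen : u.length ≤ v.length)
    (h : IsPrefInf u (pad v)) : u <+: v := by
  rw [isPrefInf_iff] at h
  rw [List.prefix_iff_eq_take]
  apply List.ext_getElem (by simp [Nat.min_eq_left hlen])
  intro k h1 h2
  rw [List.getElem_take]
  have hk' : k < v.length := lt_of_lt_of_le h1 hlen
  rw [h k h1, pad, List.getD_eq_getElem _ _ hk']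

lemma prefix_rev_of_isPrefInf_pad {u v : List Bool} (hlen : v.length ≤ u.length)
    (h : IsPrefInf u (pad v)) : v <+: u := by
  rw [isPrefInf_iff] at h
  rw [List.prefix_iff_eq_take]
  apply List.ext_getElem (by simp [Nat.min_eq_left hlen])
  intro k h1 h2
  rw [List.getElem_take]
  have hk : k < u.length := lt_of_lt_of_le h1 hlen
  rw [h k hk, pad, List.getD_eq_getElem _ _ h1]

lemma isPrefInf_concat {u : List Bool} {b : Bool} {z : ℕ → Bool} :
    IsPrefInf (u ++ [b]) z ↔ IsPrefInf u z ∧ z u.length = b := by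
  constructor
  · intro h
    refine ⟨isPrefInf_of_prefix (List.prefix_append u [b]) h, ?_⟩
    have := (isPrefInf_iff.1 h) u.length (by simp)
    simpa using this.symm
  · rintro ⟨h1, h2⟩
    rw [isPrefInf_iff]
    intro k hk
    have hk' : k < u.length + 1 := by simpa using hk
    rcases Nat.lt_succ_iff_lt_or_eq.1 hk' with hk'' | rfl
    · rw [List.getElem_append_left hk'']
      exact isPrefInf_iff.1 h1 k hk''
    · have hb : (u ++ [b])[u.length] = b := by simp
      rw [hb]; exact h2.symm

lemma exists_leaf_ext (s : Finset (List Bool)) {u : List Bool} (hu : u ∈ s) :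
    ∃ l ∈ s, u <+: l ∧ ∀ w ∈ s, l <+: w → w = l := by
  classical
  obtain ⟨l, hl, hmax⟩ := Finset.exists_max_image (s.filter (u <+: ·)) List.length
    ⟨u, by simp [hu]⟩
  rw [Finset.mem_filter] at hl
  refine ⟨l, hl.1, hl.2, ?_⟩
  intro w hw hlw
  have hwmem : w ∈ s.filter (u <+: ·) := Finset.mem_filter.2 ⟨hw, hl.2.trans hlw⟩
  exact (hlw.eq_of_length (le_antisymm hlw.length_le (hmax w hwmem))).symm

/-- A binary tree `s` with at least two leaves arises as a radix sort tree of distinct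
infinite binary words if and only if for every leaf `u ++ [b]` of `s` the sibling word
`u ++ [!b]` is also a vertex of `s`. -/
theorem radixSortTree_characterization (s : Finset (List Bool))
    (hne : s.Nonempty) (hpc : PrefixClosed ↑s) (hleaves : 2 ≤ leafCount s) :
    (∃ (n : ℕ) (z : Fin n → ℕ → Bool), Function.Injective z ∧ ↑s = RTree z) ↔
      (∀ v ∈ s, IsTreeLeaf s v →
        ∀ (u : List Bool) (b : Bool), v = u ++ [b] → u ++ [!b] ∈ s) := by
  constructor
  · rintro ⟨n, z, hzinj, hz⟩ v hv hleaf u b rfl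
    have hmem : ∀ x : List Bool, x ∈ s ↔ x ∈ RTree z := by
      intro x; rw [← Finset.mem_coe, hz]
    obtain ⟨i, hvi, hrest⟩ := (hmem _).1 hv
    have hne' : u ++ [b] ≠ [] := by simp
    obtain ⟨j, hji, hwj⟩ := hrest.resolve_left hne'
    rw [List.dropLast_concat] at hwj
    by_cases hb : z j u.length = b
    · exfalso
      have hwmem : (u ++ [b]) ++ [z i (u ++ [b]).length] ∈ s := by
        rw [hmem]
        refine ⟨i, isPrefInf_concat.2 ⟨hvi, rfl⟩, Or.inr ⟨j, hji, ?_⟩⟩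
        rw [List.dropLast_concat]
        exact isPrefInf_concat.2 ⟨hwj, hb⟩
      have := hleaf.2 _ hwmem (List.prefix_append _ _)
      apply_fun List.length at this
      simp at this
    · have hb' : z j u.length = !b := by
        cases hzb : z j u.length <;> cases b <;> simp_all
      rw [hmem]
      refine ⟨j, isPrefInf_concat.2 ⟨hwj, hb'⟩, Or.inr ⟨i, Ne.symm hji, ?_⟩⟩
      rw [List.dropLast_concat]
      exact isPrefInf_of_prefix (List.prefix_append u [b]) hvi
  · intro hsib
    set L := s.filter (fun v => ∀ w ∈ s, v <+: w → w = v) with hLdef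
    have hLcard : 2 ≤ L.card := hleaves
    have hLmem : ∀ v ∈ L, v ∈ s ∧ ∀ w ∈ s, v <+: w → w = v := by
      intro v hv
      exact Finset.mem_filter.1 hv
    set e := L.equivFin with he
    refine ⟨L.card, fun i => pad ((e.symm i : List Bool)), ?_, ?_⟩
    · have key : ∀ i j : Fin L.card,
          pad ((e.symm i : List Bool)) = pad ((e.symm j : List Bool)) →
          (e.symm i : List Bool).length ≤ (e.symm j : List Bool).length → i = j := by
        intro i j hpad hlen
        have hmi := hLmem _ (e.symm i).2
        have hmj := hLmem _ (e.symm j).2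
        have hpre : (e.symm i : List Bool) <+: (e.symm j : List Bool) :=
          prefix_of_isPrefInf_pad hlen (hpad ▸ isPrefInf_pad (List.prefix_refl _))
        have heq := hmi.2 _ hmj.1 hpre
        exact e.symm.injective (Subtype.ext heq.symm)
      intro i j hij
      rcases le_total (e.symm i : List Bool).length (e.symm j : List Bool).length with h | h
      · exact key i j hij h
      · exact (key j i hij.symm h).symm
    · ext u
      simp only [Finset.mem_coe]
      constructor
      · intro hu
        obtain ⟨l, hls, hul, hlleaf⟩ := exists_leaf_ext s hu
        rcases eq_or_ne u [] with rfl | hune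
        · have hlL : l ∈ L := Finset.mem_filter.2 ⟨hls, hlleaf⟩
          exact ⟨e ⟨l, hlL⟩, by rw [isPrefInf_iff]; intro k hk; simp at hk, Or.inl rfl⟩
        · have hlne : l ≠ [] := by
            intro h; rw [h, List.prefix_nil] at hul; exact hune hul
          obtain ⟨l', d, rfl⟩ := (List.eq_nil_or_concat l).resolve_left hlne
          obtain ⟨u', c, rfl⟩ := (List.eq_nil_or_concat u).resolve_left hune
          simp only [List.concat_eq_append] at hls hlleaf hul ⊢
          have hlL : l' ++ [d] ∈ L := Finset.mem_filter.2 ⟨hls, hlleaf⟩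
          have hzi : ((e.symm (e ⟨l' ++ [d], hlL⟩)) : List Bool) = l' ++ [d] := by
            rw [Equiv.symm_apply_apply]
          have hsibl : l' ++ [!d] ∈ s :=
            hsib _ hls ⟨hls, hlleaf⟩ l' d rfl
          obtain ⟨m, hms, hsm, hmleaf⟩ := exists_leaf_ext s hsibl
          have hmne : m ≠ l' ++ [d] := by
            intro h
            rw [h] at hsm
            have := hsm.eq_of_length (by simp)
            simp at this
          have hmL : m ∈ L := Finset.mem_filter.2 ⟨hms, hmleaf⟩
          have hzj : ((e.symm (e ⟨m, hmL⟩)) : List Bool) = m := by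
            rw [Equiv.symm_apply_apply]
          have hji : e ⟨m, hmL⟩ ≠ e ⟨l' ++ [d], hlL⟩ := by
            intro h
            exact hmne (congrArg Subtype.val (e.injective h))
          have hlen : u'.length ≤ l'.length := by
            have := hul.length_le
            simp only [List.length_append, List.length_singleton] at this
            omega
          have hpre : u' <+: l' :=
            List.prefix_of_prefix_length_le ((List.prefix_append u' [c]).trans hul)
              (List.prefix_append l' [d]) hlen
          refine ⟨e ⟨l' ++ [d], hlL⟩, ?_, Or.inr ⟨e ⟨m, hmL⟩, hji, ?_⟩⟩
          · beta_reduce; rw [hzi]; exact isPrefInf_pad hul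
          · beta_reduce; rw [List.dropLast_concat, hzj]
            exact isPrefInf_pad (hpre.trans ((List.prefix_append l' [!d]).trans hsm))
      · rintro ⟨i, hui, hrest⟩
        have hmi := hLmem _ (e.symm i).2
        rcases hrest with rfl | ⟨j, hji, hwj⟩
        · obtain ⟨x, hx⟩ := hne
          exact hpc x (Finset.mem_coe.2 hx) [] (List.nil_prefix)
        · by_cases hlen : u.length ≤ (e.symm i : List Bool).length
          · exact hpc _ (Finset.mem_coe.2 hmi.1) u (prefix_of_isPrefInf_pad hlen hui)
          · exfalso
            push_neg at hlen
            have hmj := hLmem _ (e.symm j).2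
            have hvi_u : (e.symm i : List Bool) <+: u :=
              prefix_rev_of_isPrefInf_pad (le_of_lt hlen) hui
            have hvi_w : (e.symm i : List Bool) <+: u.dropLast :=
              List.prefix_of_prefix_length_le hvi_u (List.dropLast_prefix u)
                (by rw [List.length_dropLast]; omega)
            have hvivj : IsPrefInf (e.symm i : List Bool) (pad (e.symm j : List Bool)) :=
              isPrefInf_of_prefix hvi_w hwj
            have : (e.symm i : List Bool) = (e.symm j : List Bool) := by
              rcases le_total (e.symm i : List Bool).length (e.symm j : List Bool).length
                with h | h
              · exact (hmi.2 _ hmj.1 (prefix_of_isPrefInf_pad h hvivj)).symm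
              · exact hmj.2 _ hmi.1 (prefix_rev_of_isPrefInf_pad h hvivj)
            exact hji (e.symm.injective (Subtype.ext this.symm))
end

section
/- For a radix sort tree s, the PATRICIA contraction Φ(s) has the same number of out-degree-2 vertices as s and the same number of leaves as s. -/
/-- The class of radix sort trees: either the trivial tree `{∅}` or a nonempty,
prefix-closed finite binary tree with at least two leaves in which the sibling of
every leaf is also a vertex. -/
def RadixTree (s : Finset (List Bool)) : Prop :=
  s.Nonempty ∧ PrefixClosed ↑s ∧
    (s = {([] : List Bool)} ∨
      (2 ≤ leafCount s ∧ ∀ v ∈ s, IsTreeLeaf s v →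
        ∀ (u : List Bool) (b : Bool), v = u ++ [b] → u ++ [!b] ∈ s))

/-- The PATRICIA address of a vertex `v` of `s`: the word recording, for every strict
ancestor of `v` that has out-degree 2 in `s`, the next letter of `v` after it.  This
realizes the deletion of all out-degree-1 vertices. -/
def contract (s : Finset (List Bool)) (v : List Bool) : List Bool :=
  (List.range v.length).filterMap fun k =>
    if (v.take k ++ [false]) ∈ s ∧ (v.take k ++ [true]) ∈ s then v[k]? else none

/-- The PATRICIA contraction `Φ` of a tree `s`: the image under `contract s` of the
vertices of `s` of out-degree 0 or 2. -/
def patricia (s : Finset (List Bool)) : Finset (List Bool) :=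
  (s.filter fun v =>
      (∀ w ∈ s, v <+: w → w = v) ∨
        ((v ++ [false]) ∈ s ∧ (v ++ [true]) ∈ s)).image (contract s)

/-- The number of out-degree-2 vertices of a finite tree. -/
def branchCount (s : Finset (List Bool)) : ℕ :=
  (s.filter fun v => (v ++ [false]) ∈ s ∧ (v ++ [true]) ∈ s).card

private lemma mem_of_prefix {s : Finset (List Bool)} (hpc : PrefixClosed ↑s) {v u : List Bool}
    (hv : v ∈ s) (h : u <+: v) : u ∈ s :=
  hpc v (Finset.mem_coe.mpr hv) u h

private lemma contract_restrict (s : Finset (List Bool)) (v t : List Bool) :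
    ((List.range v.length).filterMap fun k =>
      if ((v ++ t).take k ++ [false]) ∈ s ∧ ((v ++ t).take k ++ [true]) ∈ s
        then (v ++ t)[k]? else none) = contract s v := by
  unfold contract
  apply List.filterMap_congr
  intro k hk
  rw [List.mem_range] at hk
  rw [List.take_append_of_le_length hk.le, List.getElem?_append, if_pos hk]

private lemma contract_append (s : Finset (List Bool)) (v t : List Bool) :
    contract s (v ++ t) = contract s v ++
      (((List.range t.length).map (v.length + ·)).filterMap fun k =>
        if ((v ++ t).take k ++ [false]) ∈ s ∧ ((v ++ t).take k ++ [true]) ∈ s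
          then (v ++ t)[k]? else none) := by
  unfold contract
  rw [List.length_append, List.range_add, List.filterMap_append]
  congr 1
  exact contract_restrict s v t

private lemma contract_mono (s : Finset (List Bool)) {v w : List Bool} (h : v <+: w) :
    contract s v <+: contract s w := by
  obtain ⟨t, rfl⟩ := h
  rw [contract_append]
  exact List.prefix_append _ _

private lemma contract_concat (s : Finset (List Bool)) (v : List Bool) (b : Bool) :
    contract s (v ++ [b]) = contract s v ++
      (if (v ++ [false]) ∈ s ∧ (v ++ [true]) ∈ s then [b] else []) := by
  rw [contract_append]
  congr 1
  by_cases hbr : (v ++ [false]) ∈ s ∧ (v ++ [true]) ∈ s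
  · rw [if_pos hbr]
    simp [List.filterMap, List.take_left, List.getElem?_concat_length, hbr]
  · rw [if_neg hbr]
    simp [List.filterMap, List.take_left, hbr]

private lemma exists_tip (s : Finset (List Bool)) (hpc : PrefixClosed ↑s) :
    ∀ (n : ℕ) (v : List Bool), v ∈ s → s.sup List.length ≤ v.length + n →
      ∃ w ∈ s, ((∀ u ∈ s, w <+: u → u = w) ∨ ((w ++ [false]) ∈ s ∧ (w ++ [true]) ∈ s)) ∧
        contract s w = contract s v := by
  intro n
  induction n with
  | zero =>
    intro v hv hb
    refine ⟨v, hv, Or.inl fun u hu hvu => ?_, rfl⟩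
    have h1 : u.length ≤ v.length :=
      (Finset.le_sup (f := List.length) hu).trans (by simpa using hb)
    exact (hvu.eq_of_length (le_antisymm hvu.length_le h1)).symm
  | succ n ih =>
    intro v hv hb
    by_cases hl : ∀ u ∈ s, v <+: u → u = v
    · exact ⟨v, hv, Or.inl hl, rfl⟩
    by_cases hbr : (v ++ [false]) ∈ s ∧ (v ++ [true]) ∈ s
    · exact ⟨v, hv, Or.inr hbr, rfl⟩
    push_neg at hl
    obtain ⟨u, hu, hvu, hne⟩ := hl
    obtain ⟨t, rfl⟩ := hvu
    cases t with
    | nil => simp at hne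
    | cons b t' =>
      have hchild : v ++ [b] ∈ s := mem_of_prefix hpc hu ⟨t', by simp⟩
      have hc : contract s (v ++ [b]) = contract s v := by
        rw [contract_concat, if_neg hbr, List.append_nil]
      obtain ⟨w, hw, hd, hcw⟩ := ih (v ++ [b]) hchild
        (by simp only [List.length_append, List.length_singleton]; omega)
      exact ⟨w, hw, hd, by rw [hcw, hc]⟩

private lemma exists_split : ∀ (v w : List Bool), ¬ v <+: w → ¬ w <+: v →
    ∃ u a, (u ++ [a]) <+: v ∧ (u ++ [!a]) <+: w := by
  intro v
  induction v with
  | nil => intro w h1 _; exact absurd (List.nil_prefix) h1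
  | cons a v' ih =>
    intro w h1 h2
    cases w with
    | nil => exact absurd (List.nil_prefix) h2
    | cons c w' =>
      by_cases hac : a = c
      · subst hac
        simp only [List.cons_prefix_cons, true_and] at h1 h2
        obtain ⟨u, x, hx1, hx2⟩ := ih w' h1 h2
        exact ⟨a :: u, x, by simpa [List.cons_prefix_cons] using hx1,
          by simpa [List.cons_prefix_cons] using hx2⟩
      · have hc : c = !a := by cases a <;> cases c <;> simp_all
        exact ⟨[], a, ⟨v', rfl⟩, ⟨w', by simp [hc]⟩⟩

private lemma contract_incomp {s : Finset (List Bool)} (hpc : PrefixClosed ↑s)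
    {v w : List Bool} (hv : v ∈ s) (hw : w ∈ s)
    (h1 : ¬ v <+: w) (h2 : ¬ w <+: v) : ¬ contract s v <+: contract s w := by
  obtain ⟨u, a, hav, haw⟩ := exists_split v w h1 h2
  have hm1 : u ++ [a] ∈ s := mem_of_prefix hpc hv hav
  have hm2 : u ++ [!a] ∈ s := mem_of_prefix hpc hw haw
  have hbr : (u ++ [false]) ∈ s ∧ (u ++ [true]) ∈ s := by
    cases a
    · exact ⟨hm1, by simpa using hm2⟩
    · exact ⟨by simpa using hm2, hm1⟩
  have h3 : contract s u ++ [a] <+: contract s v := by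
    have := contract_mono s hav
    rwa [contract_concat s u a, if_pos hbr] at this
  have h4 : contract s u ++ [!a] <+: contract s w := by
    have := contract_mono s haw
    rwa [contract_concat s u (!a), if_pos hbr] at this
  intro hcon
  have h5 := h3.trans hcon
  have h6 : contract s u ++ [a] = contract s u ++ [!a] :=
    (List.prefix_of_prefix_length_le h5 h4 (by simp)).eq_of_length (by simp)
  simp at h6

private lemma contract_leaf_max {s : Finset (List Bool)} (hpc : PrefixClosed ↑s)
    {v w : List Bool} (hv : v ∈ s) (hleaf : ∀ u ∈ s, v <+: u → u = v) (hw : w ∈ s)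
    (h : contract s v <+: contract s w) : contract s w = contract s v := by
  by_cases hvw : v <+: w
  · rw [hleaf w hw hvw]
  by_cases hwv : w <+: v
  · exact (contract_mono s hwv).eq_of_length
      (le_antisymm (contract_mono s hwv).length_le h.length_le)
  · exact absurd h (contract_incomp hpc hv hw hvw hwv)

private lemma leaf_no_ext {s : Finset (List Bool)} (hpc : PrefixClosed ↑s)
    {v w : List Bool} (hv : v ∈ s) (hleaf : ∀ u ∈ s, v <+: u → u = v) (hw : w ∈ s)
    (b : Bool) (h : contract s w = contract s v ++ [b]) : False := by
  have h2 := contract_leaf_max hpc hv hleaf hw (by rw [h]; exact List.prefix_append _ _)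
  rw [h] at h2
  simp at h2

private lemma branch_child_mem {s : Finset (List Bool)} (hpc : PrefixClosed ↑s)
    {v : List Bool} (hv : v ∈ s) (hbr : (v ++ [false]) ∈ s ∧ (v ++ [true]) ∈ s) (b : Bool) :
    contract s v ++ [b] ∈ patricia s := by
  have hc : v ++ [b] ∈ s := by cases b; exacts [hbr.1, hbr.2]
  obtain ⟨w, hw, hd, hcw⟩ := exists_tip s hpc (s.sup List.length) (v ++ [b]) hc
    (Nat.le_add_left _ _)
  have hcc : contract s w = contract s v ++ [b] := by
    rw [hcw, contract_concat, if_pos hbr]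
  exact Finset.mem_image.mpr ⟨w, Finset.mem_filter.mpr ⟨hw, hd⟩, hcc⟩

private lemma contract_inj {s : Finset (List Bool)} (hpc : PrefixClosed ↑s)
    {v w : List Bool} (hv : v ∈ s) (hw : w ∈ s)
    (hdv : (∀ u ∈ s, v <+: u → u = v) ∨ ((v ++ [false]) ∈ s ∧ (v ++ [true]) ∈ s))
    (hdw : (∀ u ∈ s, w <+: u → u = w) ∨ ((w ++ [false]) ∈ s ∧ (w ++ [true]) ∈ s))
    (hc : contract s v = contract s w) : v = w := by
  have key : ∀ x y : List Bool, y ∈ s →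
      ((∀ u ∈ s, x <+: u → u = x) ∨ ((x ++ [false]) ∈ s ∧ (x ++ [true]) ∈ s)) →
      x <+: y → contract s x = contract s y → x = y := by
    intro x y hy hdx hxy hcxy
    obtain ⟨t, rfl⟩ := hxy
    cases t with
    | nil => simp
    | cons b t' =>
      rcases hdx with hleaf | hbr
      · exact (hleaf _ hy ⟨b :: t', rfl⟩).symm
      · exfalso
        have h1 : contract s x ++ [b] <+: contract s (x ++ b :: t') := by
          have := contract_mono s (⟨t', by simp⟩ : x ++ [b] <+: x ++ b :: t')
          rwa [contract_concat, if_pos hbr] at this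
        rw [← hcxy] at h1
        have := h1.length_le
        simp at this
  by_cases hvw : v <+: w
  · exact key v w hw hdv hvw hc
  by_cases hwv : w <+: v
  · exact (key w v hv hdw hwv hc.symm).symm
  · exact absurd (show contract s v <+: contract s w by rw [hc])
      (contract_incomp hpc hv hw hvw hwv)

/-- The PATRICIA contraction of a radix sort tree has the same number of out-degree-2
vertices and the same number of leaves as the original tree. -/
theorem patricia_preserves_counts (s : Finset (List Bool)) (h : RadixTree s) :
    branchCount (patricia s) = branchCount s ∧
      leafCount (patricia s) = leafCount s := by
  obtain ⟨-, hpc, -⟩ := h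
  have hinjB : Set.InjOn (contract s)
      ↑(s.filter fun v => (v ++ [false]) ∈ s ∧ (v ++ [true]) ∈ s) := by
    intro v hv w hw hc
    simp only [Finset.coe_filter, Set.mem_setOf_eq] at hv hw
    exact contract_inj hpc hv.1 hw.1 (Or.inr hv.2) (Or.inr hw.2) hc
  have hinjL : Set.InjOn (contract s)
      ↑(s.filter fun v => ∀ w ∈ s, v <+: w → w = v) := by
    intro v hv w hw hc
    simp only [Finset.coe_filter, Set.mem_setOf_eq] at hv hw
    exact contract_inj hpc hv.1 hw.1 (Or.inl hv.2) (Or.inl hw.2) hc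
  have hBeq : (patricia s).filter
        (fun x => (x ++ [false]) ∈ patricia s ∧ (x ++ [true]) ∈ patricia s)
      = (s.filter fun v => (v ++ [false]) ∈ s ∧ (v ++ [true]) ∈ s).image (contract s) := by
    ext x
    rw [Finset.mem_filter, Finset.mem_image]
    constructor
    · rintro ⟨hx, hx0, _⟩
      rw [patricia, Finset.mem_image] at hx
      obtain ⟨v, hvf, rfl⟩ := hx
      rw [Finset.mem_filter] at hvf
      rcases hvf.2 with hleaf | hbr
      · exfalso
        rw [patricia, Finset.mem_image] at hx0
        obtain ⟨w, hwf, hw⟩ := hx0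
        exact leaf_no_ext hpc hvf.1 hleaf (Finset.mem_filter.mp hwf).1 false hw
      · exact ⟨v, Finset.mem_filter.mpr ⟨hvf.1, hbr⟩, rfl⟩
    · rintro ⟨v, hvf, rfl⟩
      rw [Finset.mem_filter] at hvf
      refine ⟨?_, ?_, ?_⟩
      · rw [patricia, Finset.mem_image]
        exact ⟨v, Finset.mem_filter.mpr ⟨hvf.1, Or.inr hvf.2⟩, rfl⟩
      · exact branch_child_mem hpc hvf.1 hvf.2 false
      · exact branch_child_mem hpc hvf.1 hvf.2 true
  have hLeq : (patricia s).filter (fun x => ∀ y ∈ patricia s, x <+: y → y = x)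
      = (s.filter fun v => ∀ w ∈ s, v <+: w → w = v).image (contract s) := by
    ext x
    rw [Finset.mem_filter, Finset.mem_image]
    constructor
    · rintro ⟨hx, hlf⟩
      rw [patricia, Finset.mem_image] at hx
      obtain ⟨v, hvf, rfl⟩ := hx
      rw [Finset.mem_filter] at hvf
      rcases hvf.2 with hleaf | hbr
      · exact ⟨v, Finset.mem_filter.mpr ⟨hvf.1, hleaf⟩, rfl⟩
      · exfalso
        have hmem := branch_child_mem hpc hvf.1 hbr true
        have := hlf _ hmem (List.prefix_append _ _)
        simp at this
    · rintro ⟨v, hvf, rfl⟩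
      rw [Finset.mem_filter] at hvf
      refine ⟨?_, ?_⟩
      · rw [patricia, Finset.mem_image]
        exact ⟨v, Finset.mem_filter.mpr ⟨hvf.1, Or.inl hvf.2⟩, rfl⟩
      · intro y hy hpre
        rw [patricia, Finset.mem_image] at hy
        obtain ⟨w, hwf, rfl⟩ := hy
        exact contract_leaf_max hpc hvf.1 hvf.2 (Finset.mem_filter.mp hwf).1 hpre
  constructor
  · rw [branchCount, hBeq, Finset.card_image_of_injOn hinjB, branchCount]
  · rw [leafCount, hLeq, Finset.card_image_of_injOn hinjL, leafCount]
end

section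
/- In any didendritic system with at least three labels, for any distinct labels i, j, k there is a bijection from the set of equivalence classes {⟨g,h⟩ : g,h ∈ {i,j,k}} to the vertex set of a full binary tree with exactly three leaves labeled i, j, k, which preserves the three partial orders <_L, <_R, < and maps ⟨g,g⟩ to the leaf labeled g. -/
/-- Strict prefix order on vertices of a binary tree. -/
def treeLt (u v : List Bool) : Prop := u <+: v ∧ u ≠ v

/-- `u <_L v` on a binary tree: `v` lies in the left (0-) subtree below `u`. -/
def treeLtL (u v : List Bool) : Prop := u ++ [false] <+: v

/-- `u <_R v` on a binary tree: `v` lies in the right (1-) subtree below `u`. -/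
def treeLtR (u v : List Bool) : Prop := u ++ [true] <+: v
/-- A didendritic system on the label set `N`: the set `N × N` equipped with an
equivalence relation `eqv` (whose classes are the `⟨·,·⟩`), and strict partial orders
`ltL`, `ltR`, `lt` on the classes (formalized as relations on pairs that respect `eqv`),
satisfying axioms (A)-(E). -/
structure DidendriticSystem (N : Type*) where
  eqv : N × N → N × N → Prop
  iseqv : Equivalence eqv
  ltL : N × N → N × N → Prop
  ltR : N × N → N × N → Prop
  lt : N × N → N × N → Prop
  ltL_congr : ∀ a a' b b', eqv a a' → eqv b b' → ltL a b → ltL a' b'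
  ltR_congr : ∀ a a' b b', eqv a a' → eqv b b' → ltR a b → ltR a' b'
  lt_congr : ∀ a a' b b', eqv a a' → eqv b b' → lt a b → lt a' b'
  lt_trans : ∀ a b c, lt a b → lt b c → lt a c
  lt_irrefl : ∀ a b, eqv a b → ¬ lt a b
  ltL_trans : ∀ a b c, ltL a b → ltL b c → ltL a c
  ltL_irrefl : ∀ a b, eqv a b → ¬ ltL a b
  ltR_trans : ∀ a b c, ltR a b → ltR b c → ltR a c
  ltR_irrefl : ∀ a b, eqv a b → ¬ ltR a b
  /-- (A) `(i,j) ≡ (j,i)`. -/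
  axA : ∀ i j : N, eqv (i, j) (j, i)
  /-- (B) sibling resolution for distinct labels. -/
  axB : ∀ i j : N, i ≠ j →
    (ltL (i, j) (i, i) ∧ ltR (i, j) (j, j)) ∨
      (ltR (i, j) (i, i) ∧ ltL (i, j) (j, j))
  /-- (C) the triplet property: exactly one of three alternatives holds. -/
  axC : ∀ i j k : N, i ≠ j → j ≠ k → i ≠ k →
    ((eqv (i, j) (i, k) ∧ lt (i, j) (j, k)) ∧
        ¬(eqv (j, k) (j, i) ∧ lt (j, k) (k, i)) ∧
        ¬(eqv (k, i) (k, j) ∧ lt (k, i) (i, j))) ∨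
    (¬(eqv (i, j) (i, k) ∧ lt (i, j) (j, k)) ∧
        (eqv (j, k) (j, i) ∧ lt (j, k) (k, i)) ∧
        ¬(eqv (k, i) (k, j) ∧ lt (k, i) (i, j))) ∨
    (¬(eqv (i, j) (i, k) ∧ lt (i, j) (j, k)) ∧
        ¬(eqv (j, k) (j, i) ∧ lt (j, k) (k, i)) ∧
        (eqv (k, i) (k, j) ∧ lt (k, i) (i, j)))
  /-- (D) `ltL` and `ltR` are mutually exclusive and `lt` is their union. -/
  axD : ∀ a b : N × N, ¬(ltL a b ∧ ltR a b) ∧ (lt a b ↔ ltL a b ∨ ltR a b)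
  /-- (E) left/right relations propagate down the order. -/
  axE : ∀ a b c : N × N,
    (ltL a b → lt b c → ltL a c) ∧ (ltR a b → lt b c → ltR a c)


def DGoalDD {N : Type*} (D : DidendriticSystem N) (S : Set N) : Prop :=
  ∃ (t : Finset (List Bool)) (φ : N × N → List Bool),
    FullBinTree t ∧ leafCount t = 3 ∧
    (∀ g ∈ S, ∀ h ∈ S, φ (g, h) ∈ t) ∧
    (∀ v ∈ t, ∃ g ∈ S, ∃ h ∈ S, φ (g, h) = v) ∧
    (∀ g h g' h' : N, g ∈ S → h ∈ S →
      g' ∈ S → h' ∈ S →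
      (φ (g, h) = φ (g', h') ↔ D.eqv (g, h) (g', h')) ∧
      (D.ltL (g, h) (g', h') ↔ treeLtL (φ (g, h)) (φ (g', h'))) ∧
      (D.ltR (g, h) (g', h') ↔ treeLtR (φ (g, h)) (φ (g', h'))) ∧
      (D.lt (g, h) (g', h') ↔ treeLt (φ (g, h)) (φ (g', h')))) ∧
    (∀ g ∈ S, IsTreeLeaf t (φ (g, g)))

private lemma pfx1DD {u : List Bool} {a : Bool} (h : u <+: [a]) : u = [] ∨ u = [a] := by
  rcases h with ⟨s, hs⟩
  rcases u with _ | ⟨x, _ | ⟨y, u⟩⟩ <;> simp_all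

private lemma pfx2DD {u : List Bool} {a b : Bool} (h : u <+: [a, b]) :
    u = [] ∨ u = [a] ∨ u = [a, b] := by
  rcases h with ⟨s, hs⟩
  rcases u with _ | ⟨x, _ | ⟨y, _ | ⟨z, u⟩⟩⟩ <;> simp_all

def dTDD (c : Bool) : Finset (List Bool) := {[], [c], [!c], [!c, c], [!c, !c]}

private lemma prefixClosed_dTDD (c : Bool) : PrefixClosed ↑(dTDD c) := by
  intro v hv u hu
  simp only [dTDD, Finset.coe_insert, Set.mem_insert_iff, Finset.coe_singleton,
    Set.mem_singleton_iff] at hv ⊢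
  rcases hv with rfl | rfl | rfl | rfl | rfl
  · simp_all
  · rcases pfx1DD hu with rfl | rfl <;> tauto
  · rcases pfx1DD hu with rfl | rfl <;> tauto
  · rcases pfx2DD hu with rfl | rfl | rfl <;> tauto
  · rcases pfx2DD hu with rfl | rfl | rfl <;> tauto

open Classical in
noncomputable def dphiDD {N : Type*} (c : Bool) (i j k : N) : N × N → List Bool := fun p =>
  if p.1 = i ∧ p.2 = i then [c]
  else if p.1 = j ∧ p.2 = j then [!c, c]
  else if p.1 = k ∧ p.2 = k then [!c, !c]
  else if (p.1 = j ∧ p.2 = k) ∨ (p.1 = k ∧ p.2 = j) then [!c]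
  else []

private lemma deqv_iffDD {N : Type*} (D : DidendriticSystem N) {a a' b b' : N × N}
    (ha : D.eqv a a') (hb : D.eqv b b') : D.eqv a b ↔ D.eqv a' b' :=
  ⟨fun h => D.iseqv.trans (D.iseqv.trans (D.iseqv.symm ha) h) hb,
   fun h => D.iseqv.trans (D.iseqv.trans ha h) (D.iseqv.symm hb)⟩

private lemma dltL_iffDD {N : Type*} (D : DidendriticSystem N) {a a' b b' : N × N}
    (ha : D.eqv a a') (hb : D.eqv b b') : D.ltL a b ↔ D.ltL a' b' :=
  ⟨fun h => D.ltL_congr _ _ _ _ ha hb h,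
   fun h => D.ltL_congr _ _ _ _ (D.iseqv.symm ha) (D.iseqv.symm hb) h⟩

private lemma dltR_iffDD {N : Type*} (D : DidendriticSystem N) {a a' b b' : N × N}
    (ha : D.eqv a a') (hb : D.eqv b b') : D.ltR a b ↔ D.ltR a' b' :=
  ⟨fun h => D.ltR_congr _ _ _ _ ha hb h,
   fun h => D.ltR_congr _ _ _ _ (D.iseqv.symm ha) (D.iseqv.symm hb) h⟩

private lemma dlt_iffDD {N : Type*} (D : DidendriticSystem N) {a a' b b' : N × N}
    (ha : D.eqv a a') (hb : D.eqv b b') : D.lt a b ↔ D.lt a' b' :=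
  ⟨fun h => D.lt_congr _ _ _ _ ha hb h,
   fun h => D.lt_congr _ _ _ _ (D.iseqv.symm ha) (D.iseqv.symm hb) h⟩

private lemma dkeyDD {N : Type*} (D : DidendriticSystem N) {a b ra rb : N × N}
    {va vb : List Bool} {φ : N × N → List Bool}
    (ha : D.eqv a ra) (hb : D.eqv b rb) (hva : φ a = va) (hvb : φ b = vb)
    (P : (D.eqv ra rb ↔ va = vb) ∧ (D.ltL ra rb ↔ treeLtL va vb) ∧
      (D.ltR ra rb ↔ treeLtR va vb) ∧ (D.lt ra rb ↔ treeLt va vb)) :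
    (φ a = φ b ↔ D.eqv a b) ∧ (D.ltL a b ↔ treeLtL (φ a) (φ b)) ∧
    (D.ltR a b ↔ treeLtR (φ a) (φ b)) ∧ (D.lt a b ↔ treeLt (φ a) (φ b)) := by
  obtain ⟨P1, P2, P3, P4⟩ := P
  rw [hva, hvb]
  exact ⟨((deqv_iffDD D ha hb).trans P1).symm, (dltL_iffDD D ha hb).trans P2,
    (dltR_iffDD D ha hb).trans P3, (dlt_iffDD D ha hb).trans P4⟩

private lemma goal_permDD {N : Type*} (D : DidendriticSystem N) {S S' : Set N}
    (h : S = S') : DGoalDD D S → DGoalDD D S' := h ▸ id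

private lemma coreLDD {N : Type*} (D : DidendriticSystem N) (i j k : N)
    (hij : i ≠ j) (hjk : j ≠ k) (hik : i ≠ k)
    (h1 : D.eqv (i, j) (i, k)) (h2 : D.lt (i, j) (j, k))
    (h3 : D.ltL (i, j) (i, i)) (h4 : D.ltL (j, k) (j, j)) :
    DGoalDD D {i, j, k} := by
  have fRB : D.ltR (i, j) (j, j) := by
    rcases D.axB i j hij with ⟨u, v⟩ | ⟨u, v⟩
    · exact v
    · exact absurd ⟨h3, u⟩ (D.axD (i, j) (i, i)).1
  have fMC : D.ltR (j, k) (k, k) := by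
    rcases D.axB j k hjk with ⟨u, v⟩ | ⟨u, v⟩
    · exact v
    · exact absurd ⟨h4, u⟩ (D.axD (j, k) (j, j)).1
  have ltRA : D.lt (i, j) (i, i) := (D.axD (i, j) (i, i)).2.mpr (Or.inl h3)
  have ltMB : D.lt (j, k) (j, j) := (D.axD (j, k) (j, j)).2.mpr (Or.inl h4)
  have ltMC : D.lt (j, k) (k, k) := (D.axD (j, k) (k, k)).2.mpr (Or.inr fMC)
  have fRM : D.ltR (i, j) (j, k) := by
    rcases (D.axD (i, j) (j, k)).2.mp h2 with hc | hc
    · exact absurd ⟨(D.axE (i, j) (j, k) (j, j)).1 hc ltMB, fRB⟩ (D.axD (i, j) (j, j)).1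
    · exact hc
  have fRC : D.ltR (i, j) (k, k) := (D.axE (i, j) (j, k) (k, k)).2 fRM ltMC
  have ltRB : D.lt (i, j) (j, j) := D.lt_trans _ _ _ h2 ltMB
  have ltRC : D.lt (i, j) (k, k) := D.lt_trans _ _ _ h2 ltMC
  have nRR : ¬ D.lt (i, j) (i, j) := D.lt_irrefl _ _ (D.iseqv.refl (i, j))
  have nAA : ¬ D.lt (i, i) (i, i) := D.lt_irrefl _ _ (D.iseqv.refl (i, i))
  have nMM : ¬ D.lt (j, k) (j, k) := D.lt_irrefl _ _ (D.iseqv.refl (j, k))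
  have nBB : ¬ D.lt (j, j) (j, j) := D.lt_irrefl _ _ (D.iseqv.refl (j, j))
  have nCC : ¬ D.lt (k, k) (k, k) := D.lt_irrefl _ _ (D.iseqv.refl (k, k))
  have nAR : ¬ D.lt (i, i) (i, j) := fun h => D.lt_irrefl _ _ (D.iseqv.refl (i, j)) (D.lt_trans _ _ _ ltRA h)
  have nBR : ¬ D.lt (j, j) (i, j) := fun h => D.lt_irrefl _ _ (D.iseqv.refl (i, j)) (D.lt_trans _ _ _ ltRB h)
  have nCR : ¬ D.lt (k, k) (i, j) := fun h => D.lt_irrefl _ _ (D.iseqv.refl (i, j)) (D.lt_trans _ _ _ ltRC h)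
  have nMR : ¬ D.lt (j, k) (i, j) := fun h => D.lt_irrefl _ _ (D.iseqv.refl (i, j)) (D.lt_trans _ _ _ h2 h)
  have nBM : ¬ D.lt (j, j) (j, k) := fun h => D.lt_irrefl _ _ (D.iseqv.refl (j, k)) (D.lt_trans _ _ _ ltMB h)
  have nCM : ¬ D.lt (k, k) (j, k) := fun h => D.lt_irrefl _ _ (D.iseqv.refl (j, k)) (D.lt_trans _ _ _ ltMC h)
  have nAB : ¬ D.lt (i, i) (j, j) := fun h => (D.axD (i, j) (j, j)).1 ⟨(D.axE (i, j) (i, i) (j, j)).1 h3 h, fRB⟩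
  have nAC : ¬ D.lt (i, i) (k, k) := fun h => (D.axD (i, j) (k, k)).1 ⟨(D.axE (i, j) (i, i) (k, k)).1 h3 h, fRC⟩
  have nAM : ¬ D.lt (i, i) (j, k) := fun h => (D.axD (i, j) (j, k)).1 ⟨(D.axE (i, j) (i, i) (j, k)).1 h3 h, fRM⟩
  have nBA : ¬ D.lt (j, j) (i, i) := fun h => (D.axD (i, j) (i, i)).1 ⟨h3, (D.axE (i, j) (j, j) (i, i)).2 fRB h⟩
  have nBC : ¬ D.lt (j, j) (k, k) := fun h => (D.axD (j, k) (k, k)).1 ⟨(D.axE (j, k) (j, j) (k, k)).1 h4 h, fMC⟩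
  have nCA : ¬ D.lt (k, k) (i, i) := fun h => (D.axD (i, j) (i, i)).1 ⟨h3, (D.axE (i, j) (k, k) (i, i)).2 fRC h⟩
  have nCB : ¬ D.lt (k, k) (j, j) := fun h => (D.axD (j, k) (j, j)).1 ⟨h4, (D.axE (j, k) (k, k) (j, j)).2 fMC h⟩
  have nMA : ¬ D.lt (j, k) (i, i) := fun h => (D.axD (i, j) (i, i)).1 ⟨h3, (D.axE (i, j) (j, k) (i, i)).2 fRM h⟩
  have qAB : ¬ D.eqv (i, i) (j, j) := fun h => (D.axD (i, j) (j, j)).1 ⟨D.ltL_congr _ _ _ _ (D.iseqv.refl (i, j)) h h3, fRB⟩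
  have qAC : ¬ D.eqv (i, i) (k, k) := fun h => (D.axD (i, j) (k, k)).1 ⟨D.ltL_congr _ _ _ _ (D.iseqv.refl (i, j)) h h3, fRC⟩
  have qAM : ¬ D.eqv (i, i) (j, k) := fun h => (D.axD (i, j) (j, k)).1 ⟨D.ltL_congr _ _ _ _ (D.iseqv.refl (i, j)) h h3, fRM⟩
  have qBC : ¬ D.eqv (j, j) (k, k) := fun h => (D.axD (j, k) (k, k)).1 ⟨D.ltL_congr _ _ _ _ (D.iseqv.refl (j, k)) h h4, fMC⟩
  have qMB : ¬ D.eqv (j, k) (j, j) := fun h => D.lt_irrefl _ _ h ltMB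
  have qMC : ¬ D.eqv (j, k) (k, k) := fun h => D.lt_irrefl _ _ h ltMC
  have qRA : ¬ D.eqv (i, j) (i, i) := fun h => D.lt_irrefl _ _ h ltRA
  have qRB : ¬ D.eqv (i, j) (j, j) := fun h => D.lt_irrefl _ _ h ltRB
  have qRC : ¬ D.eqv (i, j) (k, k) := fun h => D.lt_irrefl _ _ h ltRC
  have qRM : ¬ D.eqv (i, j) (j, k) := fun h => D.lt_irrefl _ _ h h2
  have pRR : (D.eqv (i, j) (i, j) ↔ ([] : List Bool) = []) ∧ (D.ltL (i, j) (i, j) ↔ treeLtL [] []) ∧ (D.ltR (i, j) (i, j) ↔ treeLtR [] []) ∧ (D.lt (i, j) (i, j) ↔ treeLt [] []) :=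
    ⟨iff_of_true (D.iseqv.refl (i, j)) rfl,
      iff_of_false (fun h => nRR ((D.axD (i, j) (i, j)).2.mpr (Or.inl h))) (by unfold treeLtL; decide),
      iff_of_false (fun h => nRR ((D.axD (i, j) (i, j)).2.mpr (Or.inr h))) (by unfold treeLtR; decide),
      iff_of_false nRR (by unfold treeLt; decide)⟩
  have pRA : (D.eqv (i, j) (i, i) ↔ ([] : List Bool) = [false]) ∧ (D.ltL (i, j) (i, i) ↔ treeLtL [] [false]) ∧ (D.ltR (i, j) (i, i) ↔ treeLtR [] [false]) ∧ (D.lt (i, j) (i, i) ↔ treeLt [] [false]) :=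
    ⟨iff_of_false qRA (by decide),
      iff_of_true h3 (by unfold treeLtL; decide),
      iff_of_false (fun h => (D.axD (i, j) (i, i)).1 ⟨h3, h⟩) (by unfold treeLtR; decide),
      iff_of_true ltRA (by unfold treeLt; decide)⟩
  have pRM : (D.eqv (i, j) (j, k) ↔ ([] : List Bool) = [true]) ∧ (D.ltL (i, j) (j, k) ↔ treeLtL [] [true]) ∧ (D.ltR (i, j) (j, k) ↔ treeLtR [] [true]) ∧ (D.lt (i, j) (j, k) ↔ treeLt [] [true]) :=
    ⟨iff_of_false qRM (by decide),
      iff_of_false (fun h => (D.axD (i, j) (j, k)).1 ⟨h, fRM⟩) (by unfold treeLtL; decide),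
      iff_of_true fRM (by unfold treeLtR; decide),
      iff_of_true h2 (by unfold treeLt; decide)⟩
  have pRB : (D.eqv (i, j) (j, j) ↔ ([] : List Bool) = [true, false]) ∧ (D.ltL (i, j) (j, j) ↔ treeLtL [] [true, false]) ∧ (D.ltR (i, j) (j, j) ↔ treeLtR [] [true, false]) ∧ (D.lt (i, j) (j, j) ↔ treeLt [] [true, false]) :=
    ⟨iff_of_false qRB (by decide),
      iff_of_false (fun h => (D.axD (i, j) (j, j)).1 ⟨h, fRB⟩) (by unfold treeLtL; decide),
      iff_of_true fRB (by unfold treeLtR; decide),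
      iff_of_true ltRB (by unfold treeLt; decide)⟩
  have pRC : (D.eqv (i, j) (k, k) ↔ ([] : List Bool) = [true, true]) ∧ (D.ltL (i, j) (k, k) ↔ treeLtL [] [true, true]) ∧ (D.ltR (i, j) (k, k) ↔ treeLtR [] [true, true]) ∧ (D.lt (i, j) (k, k) ↔ treeLt [] [true, true]) :=
    ⟨iff_of_false qRC (by decide),
      iff_of_false (fun h => (D.axD (i, j) (k, k)).1 ⟨h, fRC⟩) (by unfold treeLtL; decide),
      iff_of_true fRC (by unfold treeLtR; decide),
      iff_of_true ltRC (by unfold treeLt; decide)⟩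
  have pAR : (D.eqv (i, i) (i, j) ↔ ([false] : List Bool) = []) ∧ (D.ltL (i, i) (i, j) ↔ treeLtL [false] []) ∧ (D.ltR (i, i) (i, j) ↔ treeLtR [false] []) ∧ (D.lt (i, i) (i, j) ↔ treeLt [false] []) :=
    ⟨iff_of_false (fun h => qRA (D.iseqv.symm h)) (by decide),
      iff_of_false (fun h => nAR ((D.axD (i, i) (i, j)).2.mpr (Or.inl h))) (by unfold treeLtL; decide),
      iff_of_false (fun h => nAR ((D.axD (i, i) (i, j)).2.mpr (Or.inr h))) (by unfold treeLtR; decide),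
      iff_of_false nAR (by unfold treeLt; decide)⟩
  have pAA : (D.eqv (i, i) (i, i) ↔ ([false] : List Bool) = [false]) ∧ (D.ltL (i, i) (i, i) ↔ treeLtL [false] [false]) ∧ (D.ltR (i, i) (i, i) ↔ treeLtR [false] [false]) ∧ (D.lt (i, i) (i, i) ↔ treeLt [false] [false]) :=
    ⟨iff_of_true (D.iseqv.refl (i, i)) rfl,
      iff_of_false (fun h => nAA ((D.axD (i, i) (i, i)).2.mpr (Or.inl h))) (by unfold treeLtL; decide),
      iff_of_false (fun h => nAA ((D.axD (i, i) (i, i)).2.mpr (Or.inr h))) (by unfold treeLtR; decide),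
      iff_of_false nAA (by unfold treeLt; decide)⟩
  have pAM : (D.eqv (i, i) (j, k) ↔ ([false] : List Bool) = [true]) ∧ (D.ltL (i, i) (j, k) ↔ treeLtL [false] [true]) ∧ (D.ltR (i, i) (j, k) ↔ treeLtR [false] [true]) ∧ (D.lt (i, i) (j, k) ↔ treeLt [false] [true]) :=
    ⟨iff_of_false qAM (by decide),
      iff_of_false (fun h => nAM ((D.axD (i, i) (j, k)).2.mpr (Or.inl h))) (by unfold treeLtL; decide),
      iff_of_false (fun h => nAM ((D.axD (i, i) (j, k)).2.mpr (Or.inr h))) (by unfold treeLtR; decide),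
      iff_of_false nAM (by unfold treeLt; decide)⟩
  have pAB : (D.eqv (i, i) (j, j) ↔ ([false] : List Bool) = [true, false]) ∧ (D.ltL (i, i) (j, j) ↔ treeLtL [false] [true, false]) ∧ (D.ltR (i, i) (j, j) ↔ treeLtR [false] [true, false]) ∧ (D.lt (i, i) (j, j) ↔ treeLt [false] [true, false]) :=
    ⟨iff_of_false qAB (by decide),
      iff_of_false (fun h => nAB ((D.axD (i, i) (j, j)).2.mpr (Or.inl h))) (by unfold treeLtL; decide),
      iff_of_false (fun h => nAB ((D.axD (i, i) (j, j)).2.mpr (Or.inr h))) (by unfold treeLtR; decide),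
      iff_of_false nAB (by unfold treeLt; decide)⟩
  have pAC : (D.eqv (i, i) (k, k) ↔ ([false] : List Bool) = [true, true]) ∧ (D.ltL (i, i) (k, k) ↔ treeLtL [false] [true, true]) ∧ (D.ltR (i, i) (k, k) ↔ treeLtR [false] [true, true]) ∧ (D.lt (i, i) (k, k) ↔ treeLt [false] [true, true]) :=
    ⟨iff_of_false qAC (by decide),
      iff_of_false (fun h => nAC ((D.axD (i, i) (k, k)).2.mpr (Or.inl h))) (by unfold treeLtL; decide),
      iff_of_false (fun h => nAC ((D.axD (i, i) (k, k)).2.mpr (Or.inr h))) (by unfold treeLtR; decide),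
      iff_of_false nAC (by unfold treeLt; decide)⟩
  have pMR : (D.eqv (j, k) (i, j) ↔ ([true] : List Bool) = []) ∧ (D.ltL (j, k) (i, j) ↔ treeLtL [true] []) ∧ (D.ltR (j, k) (i, j) ↔ treeLtR [true] []) ∧ (D.lt (j, k) (i, j) ↔ treeLt [true] []) :=
    ⟨iff_of_false (fun h => qRM (D.iseqv.symm h)) (by decide),
      iff_of_false (fun h => nMR ((D.axD (j, k) (i, j)).2.mpr (Or.inl h))) (by unfold treeLtL; decide),
      iff_of_false (fun h => nMR ((D.axD (j, k) (i, j)).2.mpr (Or.inr h))) (by unfold treeLtR; decide),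
      iff_of_false nMR (by unfold treeLt; decide)⟩
  have pMA : (D.eqv (j, k) (i, i) ↔ ([true] : List Bool) = [false]) ∧ (D.ltL (j, k) (i, i) ↔ treeLtL [true] [false]) ∧ (D.ltR (j, k) (i, i) ↔ treeLtR [true] [false]) ∧ (D.lt (j, k) (i, i) ↔ treeLt [true] [false]) :=
    ⟨iff_of_false (fun h => qAM (D.iseqv.symm h)) (by decide),
      iff_of_false (fun h => nMA ((D.axD (j, k) (i, i)).2.mpr (Or.inl h))) (by unfold treeLtL; decide),
      iff_of_false (fun h => nMA ((D.axD (j, k) (i, i)).2.mpr (Or.inr h))) (by unfold treeLtR; decide),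
      iff_of_false nMA (by unfold treeLt; decide)⟩
  have pMM : (D.eqv (j, k) (j, k) ↔ ([true] : List Bool) = [true]) ∧ (D.ltL (j, k) (j, k) ↔ treeLtL [true] [true]) ∧ (D.ltR (j, k) (j, k) ↔ treeLtR [true] [true]) ∧ (D.lt (j, k) (j, k) ↔ treeLt [true] [true]) :=
    ⟨iff_of_true (D.iseqv.refl (j, k)) rfl,
      iff_of_false (fun h => nMM ((D.axD (j, k) (j, k)).2.mpr (Or.inl h))) (by unfold treeLtL; decide),
      iff_of_false (fun h => nMM ((D.axD (j, k) (j, k)).2.mpr (Or.inr h))) (by unfold treeLtR; decide),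
      iff_of_false nMM (by unfold treeLt; decide)⟩
  have pMB : (D.eqv (j, k) (j, j) ↔ ([true] : List Bool) = [true, false]) ∧ (D.ltL (j, k) (j, j) ↔ treeLtL [true] [true, false]) ∧ (D.ltR (j, k) (j, j) ↔ treeLtR [true] [true, false]) ∧ (D.lt (j, k) (j, j) ↔ treeLt [true] [true, false]) :=
    ⟨iff_of_false qMB (by decide),
      iff_of_true h4 (by unfold treeLtL; decide),
      iff_of_false (fun h => (D.axD (j, k) (j, j)).1 ⟨h4, h⟩) (by unfold treeLtR; decide),
      iff_of_true ltMB (by unfold treeLt; decide)⟩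
  have pMC : (D.eqv (j, k) (k, k) ↔ ([true] : List Bool) = [true, true]) ∧ (D.ltL (j, k) (k, k) ↔ treeLtL [true] [true, true]) ∧ (D.ltR (j, k) (k, k) ↔ treeLtR [true] [true, true]) ∧ (D.lt (j, k) (k, k) ↔ treeLt [true] [true, true]) :=
    ⟨iff_of_false qMC (by decide),
      iff_of_false (fun h => (D.axD (j, k) (k, k)).1 ⟨h, fMC⟩) (by unfold treeLtL; decide),
      iff_of_true fMC (by unfold treeLtR; decide),
      iff_of_true ltMC (by unfold treeLt; decide)⟩
  have pBR : (D.eqv (j, j) (i, j) ↔ ([true, false] : List Bool) = []) ∧ (D.ltL (j, j) (i, j) ↔ treeLtL [true, false] []) ∧ (D.ltR (j, j) (i, j) ↔ treeLtR [true, false] []) ∧ (D.lt (j, j) (i, j) ↔ treeLt [true, false] []) :=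
    ⟨iff_of_false (fun h => qRB (D.iseqv.symm h)) (by decide),
      iff_of_false (fun h => nBR ((D.axD (j, j) (i, j)).2.mpr (Or.inl h))) (by unfold treeLtL; decide),
      iff_of_false (fun h => nBR ((D.axD (j, j) (i, j)).2.mpr (Or.inr h))) (by unfold treeLtR; decide),
      iff_of_false nBR (by unfold treeLt; decide)⟩
  have pBA : (D.eqv (j, j) (i, i) ↔ ([true, false] : List Bool) = [false]) ∧ (D.ltL (j, j) (i, i) ↔ treeLtL [true, false] [false]) ∧ (D.ltR (j, j) (i, i) ↔ treeLtR [true, false] [false]) ∧ (D.lt (j, j) (i, i) ↔ treeLt [true, false] [false]) :=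
    ⟨iff_of_false (fun h => qAB (D.iseqv.symm h)) (by decide),
      iff_of_false (fun h => nBA ((D.axD (j, j) (i, i)).2.mpr (Or.inl h))) (by unfold treeLtL; decide),
      iff_of_false (fun h => nBA ((D.axD (j, j) (i, i)).2.mpr (Or.inr h))) (by unfold treeLtR; decide),
      iff_of_false nBA (by unfold treeLt; decide)⟩
  have pBM : (D.eqv (j, j) (j, k) ↔ ([true, false] : List Bool) = [true]) ∧ (D.ltL (j, j) (j, k) ↔ treeLtL [true, false] [true]) ∧ (D.ltR (j, j) (j, k) ↔ treeLtR [true, false] [true]) ∧ (D.lt (j, j) (j, k) ↔ treeLt [true, false] [true]) :=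
    ⟨iff_of_false (fun h => qMB (D.iseqv.symm h)) (by decide),
      iff_of_false (fun h => nBM ((D.axD (j, j) (j, k)).2.mpr (Or.inl h))) (by unfold treeLtL; decide),
      iff_of_false (fun h => nBM ((D.axD (j, j) (j, k)).2.mpr (Or.inr h))) (by unfold treeLtR; decide),
      iff_of_false nBM (by unfold treeLt; decide)⟩
  have pBB : (D.eqv (j, j) (j, j) ↔ ([true, false] : List Bool) = [true, false]) ∧ (D.ltL (j, j) (j, j) ↔ treeLtL [true, false] [true, false]) ∧ (D.ltR (j, j) (j, j) ↔ treeLtR [true, false] [true, false]) ∧ (D.lt (j, j) (j, j) ↔ treeLt [true, false] [true, false]) :=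
    ⟨iff_of_true (D.iseqv.refl (j, j)) rfl,
      iff_of_false (fun h => nBB ((D.axD (j, j) (j, j)).2.mpr (Or.inl h))) (by unfold treeLtL; decide),
      iff_of_false (fun h => nBB ((D.axD (j, j) (j, j)).2.mpr (Or.inr h))) (by unfold treeLtR; decide),
      iff_of_false nBB (by unfold treeLt; decide)⟩
  have pBC : (D.eqv (j, j) (k, k) ↔ ([true, false] : List Bool) = [true, true]) ∧ (D.ltL (j, j) (k, k) ↔ treeLtL [true, false] [true, true]) ∧ (D.ltR (j, j) (k, k) ↔ treeLtR [true, false] [true, true]) ∧ (D.lt (j, j) (k, k) ↔ treeLt [true, false] [true, true]) :=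
    ⟨iff_of_false qBC (by decide),
      iff_of_false (fun h => nBC ((D.axD (j, j) (k, k)).2.mpr (Or.inl h))) (by unfold treeLtL; decide),
      iff_of_false (fun h => nBC ((D.axD (j, j) (k, k)).2.mpr (Or.inr h))) (by unfold treeLtR; decide),
      iff_of_false nBC (by unfold treeLt; decide)⟩
  have pCR : (D.eqv (k, k) (i, j) ↔ ([true, true] : List Bool) = []) ∧ (D.ltL (k, k) (i, j) ↔ treeLtL [true, true] []) ∧ (D.ltR (k, k) (i, j) ↔ treeLtR [true, true] []) ∧ (D.lt (k, k) (i, j) ↔ treeLt [true, true] []) :=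
    ⟨iff_of_false (fun h => qRC (D.iseqv.symm h)) (by decide),
      iff_of_false (fun h => nCR ((D.axD (k, k) (i, j)).2.mpr (Or.inl h))) (by unfold treeLtL; decide),
      iff_of_false (fun h => nCR ((D.axD (k, k) (i, j)).2.mpr (Or.inr h))) (by unfold treeLtR; decide),
      iff_of_false nCR (by unfold treeLt; decide)⟩
  have pCA : (D.eqv (k, k) (i, i) ↔ ([true, true] : List Bool) = [false]) ∧ (D.ltL (k, k) (i, i) ↔ treeLtL [true, true] [false]) ∧ (D.ltR (k, k) (i, i) ↔ treeLtR [true, true] [false]) ∧ (D.lt (k, k) (i, i) ↔ treeLt [true, true] [false]) :=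
    ⟨iff_of_false (fun h => qAC (D.iseqv.symm h)) (by decide),
      iff_of_false (fun h => nCA ((D.axD (k, k) (i, i)).2.mpr (Or.inl h))) (by unfold treeLtL; decide),
      iff_of_false (fun h => nCA ((D.axD (k, k) (i, i)).2.mpr (Or.inr h))) (by unfold treeLtR; decide),
      iff_of_false nCA (by unfold treeLt; decide)⟩
  have pCM : (D.eqv (k, k) (j, k) ↔ ([true, true] : List Bool) = [true]) ∧ (D.ltL (k, k) (j, k) ↔ treeLtL [true, true] [true]) ∧ (D.ltR (k, k) (j, k) ↔ treeLtR [true, true] [true]) ∧ (D.lt (k, k) (j, k) ↔ treeLt [true, true] [true]) :=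
    ⟨iff_of_false (fun h => qMC (D.iseqv.symm h)) (by decide),
      iff_of_false (fun h => nCM ((D.axD (k, k) (j, k)).2.mpr (Or.inl h))) (by unfold treeLtL; decide),
      iff_of_false (fun h => nCM ((D.axD (k, k) (j, k)).2.mpr (Or.inr h))) (by unfold treeLtR; decide),
      iff_of_false nCM (by unfold treeLt; decide)⟩
  have pCB : (D.eqv (k, k) (j, j) ↔ ([true, true] : List Bool) = [true, false]) ∧ (D.ltL (k, k) (j, j) ↔ treeLtL [true, true] [true, false]) ∧ (D.ltR (k, k) (j, j) ↔ treeLtR [true, true] [true, false]) ∧ (D.lt (k, k) (j, j) ↔ treeLt [true, true] [true, false]) :=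
    ⟨iff_of_false (fun h => qBC (D.iseqv.symm h)) (by decide),
      iff_of_false (fun h => nCB ((D.axD (k, k) (j, j)).2.mpr (Or.inl h))) (by unfold treeLtL; decide),
      iff_of_false (fun h => nCB ((D.axD (k, k) (j, j)).2.mpr (Or.inr h))) (by unfold treeLtR; decide),
      iff_of_false nCB (by unfold treeLt; decide)⟩
  have pCC : (D.eqv (k, k) (k, k) ↔ ([true, true] : List Bool) = [true, true]) ∧ (D.ltL (k, k) (k, k) ↔ treeLtL [true, true] [true, true]) ∧ (D.ltR (k, k) (k, k) ↔ treeLtR [true, true] [true, true]) ∧ (D.lt (k, k) (k, k) ↔ treeLt [true, true] [true, true]) :=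
    ⟨iff_of_true (D.iseqv.refl (k, k)) rfl,
      iff_of_false (fun h => nCC ((D.axD (k, k) (k, k)).2.mpr (Or.inl h))) (by unfold treeLtL; decide),
      iff_of_false (fun h => nCC ((D.axD (k, k) (k, k)).2.mpr (Or.inr h))) (by unfold treeLtR; decide),
      iff_of_false nCC (by unfold treeLt; decide)⟩
  have mii : D.eqv (i, i) (i, i) := D.iseqv.refl (i, i)
  have mij : D.eqv (i, j) (i, j) := D.iseqv.refl (i, j)
  have mik : D.eqv (i, k) (i, j) := D.iseqv.symm h1
  have mji : D.eqv (j, i) (i, j) := D.axA j i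
  have mki : D.eqv (k, i) (i, j) := D.iseqv.trans (D.axA k i) (D.iseqv.symm h1)
  have mjj : D.eqv (j, j) (j, j) := D.iseqv.refl (j, j)
  have mjk : D.eqv (j, k) (j, k) := D.iseqv.refl (j, k)
  have mkj : D.eqv (k, j) (j, k) := D.axA k j
  have mkk : D.eqv (k, k) (k, k) := D.iseqv.refl (k, k)
  have vii : dphiDD false i j k (i, i) = ([false] : List Bool) := by
    simp [dphiDD, hij, hjk, hik, Ne.symm hij, Ne.symm hjk, Ne.symm hik]
  have vij : dphiDD false i j k (i, j) = ([] : List Bool) := by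
    simp [dphiDD, hij, hjk, hik, Ne.symm hij, Ne.symm hjk, Ne.symm hik]
  have vik : dphiDD false i j k (i, k) = ([] : List Bool) := by
    simp [dphiDD, hij, hjk, hik, Ne.symm hij, Ne.symm hjk, Ne.symm hik]
  have vji : dphiDD false i j k (j, i) = ([] : List Bool) := by
    simp [dphiDD, hij, hjk, hik, Ne.symm hij, Ne.symm hjk, Ne.symm hik]
  have vjj : dphiDD false i j k (j, j) = ([true, false] : List Bool) := by
    simp [dphiDD, hij, hjk, hik, Ne.symm hij, Ne.symm hjk, Ne.symm hik]
  have vjk : dphiDD false i j k (j, k) = ([true] : List Bool) := by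
    simp [dphiDD, hij, hjk, hik, Ne.symm hij, Ne.symm hjk, Ne.symm hik]
  have vki : dphiDD false i j k (k, i) = ([] : List Bool) := by
    simp [dphiDD, hij, hjk, hik, Ne.symm hij, Ne.symm hjk, Ne.symm hik]
  have vkj : dphiDD false i j k (k, j) = ([true] : List Bool) := by
    simp [dphiDD, hij, hjk, hik, Ne.symm hij, Ne.symm hjk, Ne.symm hik]
  have vkk : dphiDD false i j k (k, k) = ([true, true] : List Bool) := by
    simp [dphiDD, hij, hjk, hik, Ne.symm hij, Ne.symm hjk, Ne.symm hik]
  refine ⟨dTDD false, dphiDD false i j k, ⟨⟨[], by decide⟩, prefixClosed_dTDD false, by decide⟩, by decide, ?_, ?_, ?_, ?_⟩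
  · intro g hg h hh
    simp only [Set.mem_insert_iff, Set.mem_singleton_iff] at hg hh
    rcases hg with rfl | rfl | rfl <;> rcases hh with rfl | rfl | rfl
    · rw [vii]; decide
    · rw [vij]; decide
    · rw [vik]; decide
    · rw [vji]; decide
    · rw [vjj]; decide
    · rw [vjk]; decide
    · rw [vki]; decide
    · rw [vkj]; decide
    · rw [vkk]; decide
  · intro v hv
    simp only [dTDD, Finset.mem_insert, Finset.mem_singleton] at hv
    rcases hv with rfl | rfl | rfl | rfl | rfl
    · exact ⟨i, by simp, j, by simp, vij⟩
    · exact ⟨i, by simp, i, by simp, vii⟩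
    · exact ⟨j, by simp, k, by simp, vjk⟩
    · exact ⟨j, by simp, j, by simp, vjj⟩
    · exact ⟨k, by simp, k, by simp, vkk⟩
  · intro g h g' h' hg hh hg' hh'
    simp only [Set.mem_insert_iff, Set.mem_singleton_iff] at hg hh hg' hh'
    rcases hg with rfl | rfl | rfl <;> rcases hh with rfl | rfl | rfl <;> rcases hg' with rfl | rfl | rfl <;> rcases hh' with rfl | rfl | rfl
    · exact dkeyDD D mii mii vii vii pAA
    · exact dkeyDD D mii mij vii vij pAR
    · exact dkeyDD D mii mik vii vik pAR
    · exact dkeyDD D mii mji vii vji pAR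
    · exact dkeyDD D mii mjj vii vjj pAB
    · exact dkeyDD D mii mjk vii vjk pAM
    · exact dkeyDD D mii mki vii vki pAR
    · exact dkeyDD D mii mkj vii vkj pAM
    · exact dkeyDD D mii mkk vii vkk pAC
    · exact dkeyDD D mij mii vij vii pRA
    · exact dkeyDD D mij mij vij vij pRR
    · exact dkeyDD D mij mik vij vik pRR
    · exact dkeyDD D mij mji vij vji pRR
    · exact dkeyDD D mij mjj vij vjj pRB
    · exact dkeyDD D mij mjk vij vjk pRM
    · exact dkeyDD D mij mki vij vki pRR
    · exact dkeyDD D mij mkj vij vkj pRM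
    · exact dkeyDD D mij mkk vij vkk pRC
    · exact dkeyDD D mik mii vik vii pRA
    · exact dkeyDD D mik mij vik vij pRR
    · exact dkeyDD D mik mik vik vik pRR
    · exact dkeyDD D mik mji vik vji pRR
    · exact dkeyDD D mik mjj vik vjj pRB
    · exact dkeyDD D mik mjk vik vjk pRM
    · exact dkeyDD D mik mki vik vki pRR
    · exact dkeyDD D mik mkj vik vkj pRM
    · exact dkeyDD D mik mkk vik vkk pRC
    · exact dkeyDD D mji mii vji vii pRA
    · exact dkeyDD D mji mij vji vij pRR
    · exact dkeyDD D mji mik vji vik pRR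
    · exact dkeyDD D mji mji vji vji pRR
    · exact dkeyDD D mji mjj vji vjj pRB
    · exact dkeyDD D mji mjk vji vjk pRM
    · exact dkeyDD D mji mki vji vki pRR
    · exact dkeyDD D mji mkj vji vkj pRM
    · exact dkeyDD D mji mkk vji vkk pRC
    · exact dkeyDD D mjj mii vjj vii pBA
    · exact dkeyDD D mjj mij vjj vij pBR
    · exact dkeyDD D mjj mik vjj vik pBR
    · exact dkeyDD D mjj mji vjj vji pBR
    · exact dkeyDD D mjj mjj vjj vjj pBB
    · exact dkeyDD D mjj mjk vjj vjk pBM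
    · exact dkeyDD D mjj mki vjj vki pBR
    · exact dkeyDD D mjj mkj vjj vkj pBM
    · exact dkeyDD D mjj mkk vjj vkk pBC
    · exact dkeyDD D mjk mii vjk vii pMA
    · exact dkeyDD D mjk mij vjk vij pMR
    · exact dkeyDD D mjk mik vjk vik pMR
    · exact dkeyDD D mjk mji vjk vji pMR
    · exact dkeyDD D mjk mjj vjk vjj pMB
    · exact dkeyDD D mjk mjk vjk vjk pMM
    · exact dkeyDD D mjk mki vjk vki pMR
    · exact dkeyDD D mjk mkj vjk vkj pMM
    · exact dkeyDD D mjk mkk vjk vkk pMC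
    · exact dkeyDD D mki mii vki vii pRA
    · exact dkeyDD D mki mij vki vij pRR
    · exact dkeyDD D mki mik vki vik pRR
    · exact dkeyDD D mki mji vki vji pRR
    · exact dkeyDD D mki mjj vki vjj pRB
    · exact dkeyDD D mki mjk vki vjk pRM
    · exact dkeyDD D mki mki vki vki pRR
    · exact dkeyDD D mki mkj vki vkj pRM
    · exact dkeyDD D mki mkk vki vkk pRC
    · exact dkeyDD D mkj mii vkj vii pMA
    · exact dkeyDD D mkj mij vkj vij pMR
    · exact dkeyDD D mkj mik vkj vik pMR
    · exact dkeyDD D mkj mji vkj vji pMR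
    · exact dkeyDD D mkj mjj vkj vjj pMB
    · exact dkeyDD D mkj mjk vkj vjk pMM
    · exact dkeyDD D mkj mki vkj vki pMR
    · exact dkeyDD D mkj mkj vkj vkj pMM
    · exact dkeyDD D mkj mkk vkj vkk pMC
    · exact dkeyDD D mkk mii vkk vii pCA
    · exact dkeyDD D mkk mij vkk vij pCR
    · exact dkeyDD D mkk mik vkk vik pCR
    · exact dkeyDD D mkk mji vkk vji pCR
    · exact dkeyDD D mkk mjj vkk vjj pCB
    · exact dkeyDD D mkk mjk vkk vjk pCM
    · exact dkeyDD D mkk mki vkk vki pCR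
    · exact dkeyDD D mkk mkj vkk vkj pCM
    · exact dkeyDD D mkk mkk vkk vkk pCC
  · intro g hg
    simp only [Set.mem_insert_iff, Set.mem_singleton_iff] at hg
    rcases hg with rfl | rfl | rfl
    · rw [vii]; exact ⟨by decide, by decide⟩
    · rw [vjj]; exact ⟨by decide, by decide⟩
    · rw [vkk]; exact ⟨by decide, by decide⟩

private lemma coreRDD {N : Type*} (D : DidendriticSystem N) (i j k : N)
    (hij : i ≠ j) (hjk : j ≠ k) (hik : i ≠ k)
    (h1 : D.eqv (i, j) (i, k)) (h2 : D.lt (i, j) (j, k))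
    (h3 : D.ltR (i, j) (i, i)) (h4 : D.ltR (j, k) (j, j)) :
    DGoalDD D {i, j, k} := by
  have fRB : D.ltL (i, j) (j, j) := by
    rcases D.axB i j hij with ⟨u, v⟩ | ⟨u, v⟩
    · exact absurd ⟨u, h3⟩ (D.axD (i, j) (i, i)).1
    · exact v
  have fMC : D.ltL (j, k) (k, k) := by
    rcases D.axB j k hjk with ⟨u, v⟩ | ⟨u, v⟩
    · exact absurd ⟨u, h4⟩ (D.axD (j, k) (j, j)).1
    · exact v
  have ltRA : D.lt (i, j) (i, i) := (D.axD (i, j) (i, i)).2.mpr (Or.inr h3)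
  have ltMB : D.lt (j, k) (j, j) := (D.axD (j, k) (j, j)).2.mpr (Or.inr h4)
  have ltMC : D.lt (j, k) (k, k) := (D.axD (j, k) (k, k)).2.mpr (Or.inl fMC)
  have fRM : D.ltL (i, j) (j, k) := by
    rcases (D.axD (i, j) (j, k)).2.mp h2 with hc | hc
    · exact hc
    · exact absurd ⟨fRB, (D.axE (i, j) (j, k) (j, j)).2 hc ltMB⟩ (D.axD (i, j) (j, j)).1
  have fRC : D.ltL (i, j) (k, k) := (D.axE (i, j) (j, k) (k, k)).1 fRM ltMC
  have ltRB : D.lt (i, j) (j, j) := D.lt_trans _ _ _ h2 ltMB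
  have ltRC : D.lt (i, j) (k, k) := D.lt_trans _ _ _ h2 ltMC
  have nRR : ¬ D.lt (i, j) (i, j) := D.lt_irrefl _ _ (D.iseqv.refl (i, j))
  have nAA : ¬ D.lt (i, i) (i, i) := D.lt_irrefl _ _ (D.iseqv.refl (i, i))
  have nMM : ¬ D.lt (j, k) (j, k) := D.lt_irrefl _ _ (D.iseqv.refl (j, k))
  have nBB : ¬ D.lt (j, j) (j, j) := D.lt_irrefl _ _ (D.iseqv.refl (j, j))
  have nCC : ¬ D.lt (k, k) (k, k) := D.lt_irrefl _ _ (D.iseqv.refl (k, k))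
  have nAR : ¬ D.lt (i, i) (i, j) := fun h => D.lt_irrefl _ _ (D.iseqv.refl (i, j)) (D.lt_trans _ _ _ ltRA h)
  have nBR : ¬ D.lt (j, j) (i, j) := fun h => D.lt_irrefl _ _ (D.iseqv.refl (i, j)) (D.lt_trans _ _ _ ltRB h)
  have nCR : ¬ D.lt (k, k) (i, j) := fun h => D.lt_irrefl _ _ (D.iseqv.refl (i, j)) (D.lt_trans _ _ _ ltRC h)
  have nMR : ¬ D.lt (j, k) (i, j) := fun h => D.lt_irrefl _ _ (D.iseqv.refl (i, j)) (D.lt_trans _ _ _ h2 h)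
  have nBM : ¬ D.lt (j, j) (j, k) := fun h => D.lt_irrefl _ _ (D.iseqv.refl (j, k)) (D.lt_trans _ _ _ ltMB h)
  have nCM : ¬ D.lt (k, k) (j, k) := fun h => D.lt_irrefl _ _ (D.iseqv.refl (j, k)) (D.lt_trans _ _ _ ltMC h)
  have nAB : ¬ D.lt (i, i) (j, j) := fun h => (D.axD (i, j) (j, j)).1 ⟨fRB, (D.axE (i, j) (i, i) (j, j)).2 h3 h⟩
  have nAC : ¬ D.lt (i, i) (k, k) := fun h => (D.axD (i, j) (k, k)).1 ⟨fRC, (D.axE (i, j) (i, i) (k, k)).2 h3 h⟩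
  have nAM : ¬ D.lt (i, i) (j, k) := fun h => (D.axD (i, j) (j, k)).1 ⟨fRM, (D.axE (i, j) (i, i) (j, k)).2 h3 h⟩
  have nBA : ¬ D.lt (j, j) (i, i) := fun h => (D.axD (i, j) (i, i)).1 ⟨(D.axE (i, j) (j, j) (i, i)).1 fRB h, h3⟩
  have nBC : ¬ D.lt (j, j) (k, k) := fun h => (D.axD (j, k) (k, k)).1 ⟨fMC, (D.axE (j, k) (j, j) (k, k)).2 h4 h⟩
  have nCA : ¬ D.lt (k, k) (i, i) := fun h => (D.axD (i, j) (i, i)).1 ⟨(D.axE (i, j) (k, k) (i, i)).1 fRC h, h3⟩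
  have nCB : ¬ D.lt (k, k) (j, j) := fun h => (D.axD (j, k) (j, j)).1 ⟨(D.axE (j, k) (k, k) (j, j)).1 fMC h, h4⟩
  have nMA : ¬ D.lt (j, k) (i, i) := fun h => (D.axD (i, j) (i, i)).1 ⟨(D.axE (i, j) (j, k) (i, i)).1 fRM h, h3⟩
  have qAB : ¬ D.eqv (i, i) (j, j) := fun h => (D.axD (i, j) (j, j)).1 ⟨fRB, D.ltR_congr _ _ _ _ (D.iseqv.refl (i, j)) h h3⟩
  have qAC : ¬ D.eqv (i, i) (k, k) := fun h => (D.axD (i, j) (k, k)).1 ⟨fRC, D.ltR_congr _ _ _ _ (D.iseqv.refl (i, j)) h h3⟩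
  have qAM : ¬ D.eqv (i, i) (j, k) := fun h => (D.axD (i, j) (j, k)).1 ⟨fRM, D.ltR_congr _ _ _ _ (D.iseqv.refl (i, j)) h h3⟩
  have qBC : ¬ D.eqv (j, j) (k, k) := fun h => (D.axD (j, k) (k, k)).1 ⟨fMC, D.ltR_congr _ _ _ _ (D.iseqv.refl (j, k)) h h4⟩
  have qMB : ¬ D.eqv (j, k) (j, j) := fun h => D.lt_irrefl _ _ h ltMB
  have qMC : ¬ D.eqv (j, k) (k, k) := fun h => D.lt_irrefl _ _ h ltMC
  have qRA : ¬ D.eqv (i, j) (i, i) := fun h => D.lt_irrefl _ _ h ltRA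
  have qRB : ¬ D.eqv (i, j) (j, j) := fun h => D.lt_irrefl _ _ h ltRB
  have qRC : ¬ D.eqv (i, j) (k, k) := fun h => D.lt_irrefl _ _ h ltRC
  have qRM : ¬ D.eqv (i, j) (j, k) := fun h => D.lt_irrefl _ _ h h2
  have pRR : (D.eqv (i, j) (i, j) ↔ ([] : List Bool) = []) ∧ (D.ltL (i, j) (i, j) ↔ treeLtL [] []) ∧ (D.ltR (i, j) (i, j) ↔ treeLtR [] []) ∧ (D.lt (i, j) (i, j) ↔ treeLt [] []) :=
    ⟨iff_of_true (D.iseqv.refl (i, j)) rfl,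
      iff_of_false (fun h => nRR ((D.axD (i, j) (i, j)).2.mpr (Or.inl h))) (by unfold treeLtL; decide),
      iff_of_false (fun h => nRR ((D.axD (i, j) (i, j)).2.mpr (Or.inr h))) (by unfold treeLtR; decide),
      iff_of_false nRR (by unfold treeLt; decide)⟩
  have pRA : (D.eqv (i, j) (i, i) ↔ ([] : List Bool) = [true]) ∧ (D.ltL (i, j) (i, i) ↔ treeLtL [] [true]) ∧ (D.ltR (i, j) (i, i) ↔ treeLtR [] [true]) ∧ (D.lt (i, j) (i, i) ↔ treeLt [] [true]) :=
    ⟨iff_of_false qRA (by decide),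
      iff_of_false (fun h => (D.axD (i, j) (i, i)).1 ⟨h, h3⟩) (by unfold treeLtL; decide),
      iff_of_true h3 (by unfold treeLtR; decide),
      iff_of_true ltRA (by unfold treeLt; decide)⟩
  have pRM : (D.eqv (i, j) (j, k) ↔ ([] : List Bool) = [false]) ∧ (D.ltL (i, j) (j, k) ↔ treeLtL [] [false]) ∧ (D.ltR (i, j) (j, k) ↔ treeLtR [] [false]) ∧ (D.lt (i, j) (j, k) ↔ treeLt [] [false]) :=
    ⟨iff_of_false qRM (by decide),
      iff_of_true fRM (by unfold treeLtL; decide),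
      iff_of_false (fun h => (D.axD (i, j) (j, k)).1 ⟨fRM, h⟩) (by unfold treeLtR; decide),
      iff_of_true h2 (by unfold treeLt; decide)⟩
  have pRB : (D.eqv (i, j) (j, j) ↔ ([] : List Bool) = [false, true]) ∧ (D.ltL (i, j) (j, j) ↔ treeLtL [] [false, true]) ∧ (D.ltR (i, j) (j, j) ↔ treeLtR [] [false, true]) ∧ (D.lt (i, j) (j, j) ↔ treeLt [] [false, true]) :=
    ⟨iff_of_false qRB (by decide),
      iff_of_true fRB (by unfold treeLtL; decide),
      iff_of_false (fun h => (D.axD (i, j) (j, j)).1 ⟨fRB, h⟩) (by unfold treeLtR; decide),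
      iff_of_true ltRB (by unfold treeLt; decide)⟩
  have pRC : (D.eqv (i, j) (k, k) ↔ ([] : List Bool) = [false, false]) ∧ (D.ltL (i, j) (k, k) ↔ treeLtL [] [false, false]) ∧ (D.ltR (i, j) (k, k) ↔ treeLtR [] [false, false]) ∧ (D.lt (i, j) (k, k) ↔ treeLt [] [false, false]) :=
    ⟨iff_of_false qRC (by decide),
      iff_of_true fRC (by unfold treeLtL; decide),
      iff_of_false (fun h => (D.axD (i, j) (k, k)).1 ⟨fRC, h⟩) (by unfold treeLtR; decide),
      iff_of_true ltRC (by unfold treeLt; decide)⟩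
  have pAR : (D.eqv (i, i) (i, j) ↔ ([true] : List Bool) = []) ∧ (D.ltL (i, i) (i, j) ↔ treeLtL [true] []) ∧ (D.ltR (i, i) (i, j) ↔ treeLtR [true] []) ∧ (D.lt (i, i) (i, j) ↔ treeLt [true] []) :=
    ⟨iff_of_false (fun h => qRA (D.iseqv.symm h)) (by decide),
      iff_of_false (fun h => nAR ((D.axD (i, i) (i, j)).2.mpr (Or.inl h))) (by unfold treeLtL; decide),
      iff_of_false (fun h => nAR ((D.axD (i, i) (i, j)).2.mpr (Or.inr h))) (by unfold treeLtR; decide),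
      iff_of_false nAR (by unfold treeLt; decide)⟩
  have pAA : (D.eqv (i, i) (i, i) ↔ ([true] : List Bool) = [true]) ∧ (D.ltL (i, i) (i, i) ↔ treeLtL [true] [true]) ∧ (D.ltR (i, i) (i, i) ↔ treeLtR [true] [true]) ∧ (D.lt (i, i) (i, i) ↔ treeLt [true] [true]) :=
    ⟨iff_of_true (D.iseqv.refl (i, i)) rfl,
      iff_of_false (fun h => nAA ((D.axD (i, i) (i, i)).2.mpr (Or.inl h))) (by unfold treeLtL; decide),
      iff_of_false (fun h => nAA ((D.axD (i, i) (i, i)).2.mpr (Or.inr h))) (by unfold treeLtR; decide),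
      iff_of_false nAA (by unfold treeLt; decide)⟩
  have pAM : (D.eqv (i, i) (j, k) ↔ ([true] : List Bool) = [false]) ∧ (D.ltL (i, i) (j, k) ↔ treeLtL [true] [false]) ∧ (D.ltR (i, i) (j, k) ↔ treeLtR [true] [false]) ∧ (D.lt (i, i) (j, k) ↔ treeLt [true] [false]) :=
    ⟨iff_of_false qAM (by decide),
      iff_of_false (fun h => nAM ((D.axD (i, i) (j, k)).2.mpr (Or.inl h))) (by unfold treeLtL; decide),
      iff_of_false (fun h => nAM ((D.axD (i, i) (j, k)).2.mpr (Or.inr h))) (by unfold treeLtR; decide),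
      iff_of_false nAM (by unfold treeLt; decide)⟩
  have pAB : (D.eqv (i, i) (j, j) ↔ ([true] : List Bool) = [false, true]) ∧ (D.ltL (i, i) (j, j) ↔ treeLtL [true] [false, true]) ∧ (D.ltR (i, i) (j, j) ↔ treeLtR [true] [false, true]) ∧ (D.lt (i, i) (j, j) ↔ treeLt [true] [false, true]) :=
    ⟨iff_of_false qAB (by decide),
      iff_of_false (fun h => nAB ((D.axD (i, i) (j, j)).2.mpr (Or.inl h))) (by unfold treeLtL; decide),
      iff_of_false (fun h => nAB ((D.axD (i, i) (j, j)).2.mpr (Or.inr h))) (by unfold treeLtR; decide),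
      iff_of_false nAB (by unfold treeLt; decide)⟩
  have pAC : (D.eqv (i, i) (k, k) ↔ ([true] : List Bool) = [false, false]) ∧ (D.ltL (i, i) (k, k) ↔ treeLtL [true] [false, false]) ∧ (D.ltR (i, i) (k, k) ↔ treeLtR [true] [false, false]) ∧ (D.lt (i, i) (k, k) ↔ treeLt [true] [false, false]) :=
    ⟨iff_of_false qAC (by decide),
      iff_of_false (fun h => nAC ((D.axD (i, i) (k, k)).2.mpr (Or.inl h))) (by unfold treeLtL; decide),
      iff_of_false (fun h => nAC ((D.axD (i, i) (k, k)).2.mpr (Or.inr h))) (by unfold treeLtR; decide),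
      iff_of_false nAC (by unfold treeLt; decide)⟩
  have pMR : (D.eqv (j, k) (i, j) ↔ ([false] : List Bool) = []) ∧ (D.ltL (j, k) (i, j) ↔ treeLtL [false] []) ∧ (D.ltR (j, k) (i, j) ↔ treeLtR [false] []) ∧ (D.lt (j, k) (i, j) ↔ treeLt [false] []) :=
    ⟨iff_of_false (fun h => qRM (D.iseqv.symm h)) (by decide),
      iff_of_false (fun h => nMR ((D.axD (j, k) (i, j)).2.mpr (Or.inl h))) (by unfold treeLtL; decide),
      iff_of_false (fun h => nMR ((D.axD (j, k) (i, j)).2.mpr (Or.inr h))) (by unfold treeLtR; decide),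
      iff_of_false nMR (by unfold treeLt; decide)⟩
  have pMA : (D.eqv (j, k) (i, i) ↔ ([false] : List Bool) = [true]) ∧ (D.ltL (j, k) (i, i) ↔ treeLtL [false] [true]) ∧ (D.ltR (j, k) (i, i) ↔ treeLtR [false] [true]) ∧ (D.lt (j, k) (i, i) ↔ treeLt [false] [true]) :=
    ⟨iff_of_false (fun h => qAM (D.iseqv.symm h)) (by decide),
      iff_of_false (fun h => nMA ((D.axD (j, k) (i, i)).2.mpr (Or.inl h))) (by unfold treeLtL; decide),
      iff_of_false (fun h => nMA ((D.axD (j, k) (i, i)).2.mpr (Or.inr h))) (by unfold treeLtR; decide),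
      iff_of_false nMA (by unfold treeLt; decide)⟩
  have pMM : (D.eqv (j, k) (j, k) ↔ ([false] : List Bool) = [false]) ∧ (D.ltL (j, k) (j, k) ↔ treeLtL [false] [false]) ∧ (D.ltR (j, k) (j, k) ↔ treeLtR [false] [false]) ∧ (D.lt (j, k) (j, k) ↔ treeLt [false] [false]) :=
    ⟨iff_of_true (D.iseqv.refl (j, k)) rfl,
      iff_of_false (fun h => nMM ((D.axD (j, k) (j, k)).2.mpr (Or.inl h))) (by unfold treeLtL; decide),
      iff_of_false (fun h => nMM ((D.axD (j, k) (j, k)).2.mpr (Or.inr h))) (by unfold treeLtR; decide),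
      iff_of_false nMM (by unfold treeLt; decide)⟩
  have pMB : (D.eqv (j, k) (j, j) ↔ ([false] : List Bool) = [false, true]) ∧ (D.ltL (j, k) (j, j) ↔ treeLtL [false] [false, true]) ∧ (D.ltR (j, k) (j, j) ↔ treeLtR [false] [false, true]) ∧ (D.lt (j, k) (j, j) ↔ treeLt [false] [false, true]) :=
    ⟨iff_of_false qMB (by decide),
      iff_of_false (fun h => (D.axD (j, k) (j, j)).1 ⟨h, h4⟩) (by unfold treeLtL; decide),
      iff_of_true h4 (by unfold treeLtR; decide),
      iff_of_true ltMB (by unfold treeLt; decide)⟩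
  have pMC : (D.eqv (j, k) (k, k) ↔ ([false] : List Bool) = [false, false]) ∧ (D.ltL (j, k) (k, k) ↔ treeLtL [false] [false, false]) ∧ (D.ltR (j, k) (k, k) ↔ treeLtR [false] [false, false]) ∧ (D.lt (j, k) (k, k) ↔ treeLt [false] [false, false]) :=
    ⟨iff_of_false qMC (by decide),
      iff_of_true fMC (by unfold treeLtL; decide),
      iff_of_false (fun h => (D.axD (j, k) (k, k)).1 ⟨fMC, h⟩) (by unfold treeLtR; decide),
      iff_of_true ltMC (by unfold treeLt; decide)⟩
  have pBR : (D.eqv (j, j) (i, j) ↔ ([false, true] : List Bool) = []) ∧ (D.ltL (j, j) (i, j) ↔ treeLtL [false, true] []) ∧ (D.ltR (j, j) (i, j) ↔ treeLtR [false, true] []) ∧ (D.lt (j, j) (i, j) ↔ treeLt [false, true] []) :=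
    ⟨iff_of_false (fun h => qRB (D.iseqv.symm h)) (by decide),
      iff_of_false (fun h => nBR ((D.axD (j, j) (i, j)).2.mpr (Or.inl h))) (by unfold treeLtL; decide),
      iff_of_false (fun h => nBR ((D.axD (j, j) (i, j)).2.mpr (Or.inr h))) (by unfold treeLtR; decide),
      iff_of_false nBR (by unfold treeLt; decide)⟩
  have pBA : (D.eqv (j, j) (i, i) ↔ ([false, true] : List Bool) = [true]) ∧ (D.ltL (j, j) (i, i) ↔ treeLtL [false, true] [true]) ∧ (D.ltR (j, j) (i, i) ↔ treeLtR [false, true] [true]) ∧ (D.lt (j, j) (i, i) ↔ treeLt [false, true] [true]) :=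
    ⟨iff_of_false (fun h => qAB (D.iseqv.symm h)) (by decide),
      iff_of_false (fun h => nBA ((D.axD (j, j) (i, i)).2.mpr (Or.inl h))) (by unfold treeLtL; decide),
      iff_of_false (fun h => nBA ((D.axD (j, j) (i, i)).2.mpr (Or.inr h))) (by unfold treeLtR; decide),
      iff_of_false nBA (by unfold treeLt; decide)⟩
  have pBM : (D.eqv (j, j) (j, k) ↔ ([false, true] : List Bool) = [false]) ∧ (D.ltL (j, j) (j, k) ↔ treeLtL [false, true] [false]) ∧ (D.ltR (j, j) (j, k) ↔ treeLtR [false, true] [false]) ∧ (D.lt (j, j) (j, k) ↔ treeLt [false, true] [false]) :=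
    ⟨iff_of_false (fun h => qMB (D.iseqv.symm h)) (by decide),
      iff_of_false (fun h => nBM ((D.axD (j, j) (j, k)).2.mpr (Or.inl h))) (by unfold treeLtL; decide),
      iff_of_false (fun h => nBM ((D.axD (j, j) (j, k)).2.mpr (Or.inr h))) (by unfold treeLtR; decide),
      iff_of_false nBM (by unfold treeLt; decide)⟩
  have pBB : (D.eqv (j, j) (j, j) ↔ ([false, true] : List Bool) = [false, true]) ∧ (D.ltL (j, j) (j, j) ↔ treeLtL [false, true] [false, true]) ∧ (D.ltR (j, j) (j, j) ↔ treeLtR [false, true] [false, true]) ∧ (D.lt (j, j) (j, j) ↔ treeLt [false, true] [false, true]) :=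
    ⟨iff_of_true (D.iseqv.refl (j, j)) rfl,
      iff_of_false (fun h => nBB ((D.axD (j, j) (j, j)).2.mpr (Or.inl h))) (by unfold treeLtL; decide),
      iff_of_false (fun h => nBB ((D.axD (j, j) (j, j)).2.mpr (Or.inr h))) (by unfold treeLtR; decide),
      iff_of_false nBB (by unfold treeLt; decide)⟩
  have pBC : (D.eqv (j, j) (k, k) ↔ ([false, true] : List Bool) = [false, false]) ∧ (D.ltL (j, j) (k, k) ↔ treeLtL [false, true] [false, false]) ∧ (D.ltR (j, j) (k, k) ↔ treeLtR [false, true] [false, false]) ∧ (D.lt (j, j) (k, k) ↔ treeLt [false, true] [false, false]) :=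
    ⟨iff_of_false qBC (by decide),
      iff_of_false (fun h => nBC ((D.axD (j, j) (k, k)).2.mpr (Or.inl h))) (by unfold treeLtL; decide),
      iff_of_false (fun h => nBC ((D.axD (j, j) (k, k)).2.mpr (Or.inr h))) (by unfold treeLtR; decide),
      iff_of_false nBC (by unfold treeLt; decide)⟩
  have pCR : (D.eqv (k, k) (i, j) ↔ ([false, false] : List Bool) = []) ∧ (D.ltL (k, k) (i, j) ↔ treeLtL [false, false] []) ∧ (D.ltR (k, k) (i, j) ↔ treeLtR [false, false] []) ∧ (D.lt (k, k) (i, j) ↔ treeLt [false, false] []) :=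
    ⟨iff_of_false (fun h => qRC (D.iseqv.symm h)) (by decide),
      iff_of_false (fun h => nCR ((D.axD (k, k) (i, j)).2.mpr (Or.inl h))) (by unfold treeLtL; decide),
      iff_of_false (fun h => nCR ((D.axD (k, k) (i, j)).2.mpr (Or.inr h))) (by unfold treeLtR; decide),
      iff_of_false nCR (by unfold treeLt; decide)⟩
  have pCA : (D.eqv (k, k) (i, i) ↔ ([false, false] : List Bool) = [true]) ∧ (D.ltL (k, k) (i, i) ↔ treeLtL [false, false] [true]) ∧ (D.ltR (k, k) (i, i) ↔ treeLtR [false, false] [true]) ∧ (D.lt (k, k) (i, i) ↔ treeLt [false, false] [true]) :=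
    ⟨iff_of_false (fun h => qAC (D.iseqv.symm h)) (by decide),
      iff_of_false (fun h => nCA ((D.axD (k, k) (i, i)).2.mpr (Or.inl h))) (by unfold treeLtL; decide),
      iff_of_false (fun h => nCA ((D.axD (k, k) (i, i)).2.mpr (Or.inr h))) (by unfold treeLtR; decide),
      iff_of_false nCA (by unfold treeLt; decide)⟩
  have pCM : (D.eqv (k, k) (j, k) ↔ ([false, false] : List Bool) = [false]) ∧ (D.ltL (k, k) (j, k) ↔ treeLtL [false, false] [false]) ∧ (D.ltR (k, k) (j, k) ↔ treeLtR [false, false] [false]) ∧ (D.lt (k, k) (j, k) ↔ treeLt [false, false] [false]) :=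
    ⟨iff_of_false (fun h => qMC (D.iseqv.symm h)) (by decide),
      iff_of_false (fun h => nCM ((D.axD (k, k) (j, k)).2.mpr (Or.inl h))) (by unfold treeLtL; decide),
      iff_of_false (fun h => nCM ((D.axD (k, k) (j, k)).2.mpr (Or.inr h))) (by unfold treeLtR; decide),
      iff_of_false nCM (by unfold treeLt; decide)⟩
  have pCB : (D.eqv (k, k) (j, j) ↔ ([false, false] : List Bool) = [false, true]) ∧ (D.ltL (k, k) (j, j) ↔ treeLtL [false, false] [false, true]) ∧ (D.ltR (k, k) (j, j) ↔ treeLtR [false, false] [false, true]) ∧ (D.lt (k, k) (j, j) ↔ treeLt [false, false] [false, true]) :=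
    ⟨iff_of_false (fun h => qBC (D.iseqv.symm h)) (by decide),
      iff_of_false (fun h => nCB ((D.axD (k, k) (j, j)).2.mpr (Or.inl h))) (by unfold treeLtL; decide),
      iff_of_false (fun h => nCB ((D.axD (k, k) (j, j)).2.mpr (Or.inr h))) (by unfold treeLtR; decide),
      iff_of_false nCB (by unfold treeLt; decide)⟩
  have pCC : (D.eqv (k, k) (k, k) ↔ ([false, false] : List Bool) = [false, false]) ∧ (D.ltL (k, k) (k, k) ↔ treeLtL [false, false] [false, false]) ∧ (D.ltR (k, k) (k, k) ↔ treeLtR [false, false] [false, false]) ∧ (D.lt (k, k) (k, k) ↔ treeLt [false, false] [false, false]) :=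
    ⟨iff_of_true (D.iseqv.refl (k, k)) rfl,
      iff_of_false (fun h => nCC ((D.axD (k, k) (k, k)).2.mpr (Or.inl h))) (by unfold treeLtL; decide),
      iff_of_false (fun h => nCC ((D.axD (k, k) (k, k)).2.mpr (Or.inr h))) (by unfold treeLtR; decide),
      iff_of_false nCC (by unfold treeLt; decide)⟩
  have mii : D.eqv (i, i) (i, i) := D.iseqv.refl (i, i)
  have mij : D.eqv (i, j) (i, j) := D.iseqv.refl (i, j)
  have mik : D.eqv (i, k) (i, j) := D.iseqv.symm h1
  have mji : D.eqv (j, i) (i, j) := D.axA j i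
  have mki : D.eqv (k, i) (i, j) := D.iseqv.trans (D.axA k i) (D.iseqv.symm h1)
  have mjj : D.eqv (j, j) (j, j) := D.iseqv.refl (j, j)
  have mjk : D.eqv (j, k) (j, k) := D.iseqv.refl (j, k)
  have mkj : D.eqv (k, j) (j, k) := D.axA k j
  have mkk : D.eqv (k, k) (k, k) := D.iseqv.refl (k, k)
  have vii : dphiDD true i j k (i, i) = ([true] : List Bool) := by
    simp [dphiDD, hij, hjk, hik, Ne.symm hij, Ne.symm hjk, Ne.symm hik]
  have vij : dphiDD true i j k (i, j) = ([] : List Bool) := by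
    simp [dphiDD, hij, hjk, hik, Ne.symm hij, Ne.symm hjk, Ne.symm hik]
  have vik : dphiDD true i j k (i, k) = ([] : List Bool) := by
    simp [dphiDD, hij, hjk, hik, Ne.symm hij, Ne.symm hjk, Ne.symm hik]
  have vji : dphiDD true i j k (j, i) = ([] : List Bool) := by
    simp [dphiDD, hij, hjk, hik, Ne.symm hij, Ne.symm hjk, Ne.symm hik]
  have vjj : dphiDD true i j k (j, j) = ([false, true] : List Bool) := by
    simp [dphiDD, hij, hjk, hik, Ne.symm hij, Ne.symm hjk, Ne.symm hik]
  have vjk : dphiDD true i j k (j, k) = ([false] : List Bool) := by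
    simp [dphiDD, hij, hjk, hik, Ne.symm hij, Ne.symm hjk, Ne.symm hik]
  have vki : dphiDD true i j k (k, i) = ([] : List Bool) := by
    simp [dphiDD, hij, hjk, hik, Ne.symm hij, Ne.symm hjk, Ne.symm hik]
  have vkj : dphiDD true i j k (k, j) = ([false] : List Bool) := by
    simp [dphiDD, hij, hjk, hik, Ne.symm hij, Ne.symm hjk, Ne.symm hik]
  have vkk : dphiDD true i j k (k, k) = ([false, false] : List Bool) := by
    simp [dphiDD, hij, hjk, hik, Ne.symm hij, Ne.symm hjk, Ne.symm hik]
  refine ⟨dTDD true, dphiDD true i j k, ⟨⟨[], by decide⟩, prefixClosed_dTDD true, by decide⟩, by decide, ?_, ?_, ?_, ?_⟩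
  · intro g hg h hh
    simp only [Set.mem_insert_iff, Set.mem_singleton_iff] at hg hh
    rcases hg with rfl | rfl | rfl <;> rcases hh with rfl | rfl | rfl
    · rw [vii]; decide
    · rw [vij]; decide
    · rw [vik]; decide
    · rw [vji]; decide
    · rw [vjj]; decide
    · rw [vjk]; decide
    · rw [vki]; decide
    · rw [vkj]; decide
    · rw [vkk]; decide
  · intro v hv
    simp only [dTDD, Finset.mem_insert, Finset.mem_singleton] at hv
    rcases hv with rfl | rfl | rfl | rfl | rfl
    · exact ⟨i, by simp, j, by simp, vij⟩
    · exact ⟨i, by simp, i, by simp, vii⟩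
    · exact ⟨j, by simp, k, by simp, vjk⟩
    · exact ⟨j, by simp, j, by simp, vjj⟩
    · exact ⟨k, by simp, k, by simp, vkk⟩
  · intro g h g' h' hg hh hg' hh'
    simp only [Set.mem_insert_iff, Set.mem_singleton_iff] at hg hh hg' hh'
    rcases hg with rfl | rfl | rfl <;> rcases hh with rfl | rfl | rfl <;> rcases hg' with rfl | rfl | rfl <;> rcases hh' with rfl | rfl | rfl
    · exact dkeyDD D mii mii vii vii pAA
    · exact dkeyDD D mii mij vii vij pAR
    · exact dkeyDD D mii mik vii vik pAR
    · exact dkeyDD D mii mji vii vji pAR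
    · exact dkeyDD D mii mjj vii vjj pAB
    · exact dkeyDD D mii mjk vii vjk pAM
    · exact dkeyDD D mii mki vii vki pAR
    · exact dkeyDD D mii mkj vii vkj pAM
    · exact dkeyDD D mii mkk vii vkk pAC
    · exact dkeyDD D mij mii vij vii pRA
    · exact dkeyDD D mij mij vij vij pRR
    · exact dkeyDD D mij mik vij vik pRR
    · exact dkeyDD D mij mji vij vji pRR
    · exact dkeyDD D mij mjj vij vjj pRB
    · exact dkeyDD D mij mjk vij vjk pRM
    · exact dkeyDD D mij mki vij vki pRR
    · exact dkeyDD D mij mkj vij vkj pRM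
    · exact dkeyDD D mij mkk vij vkk pRC
    · exact dkeyDD D mik mii vik vii pRA
    · exact dkeyDD D mik mij vik vij pRR
    · exact dkeyDD D mik mik vik vik pRR
    · exact dkeyDD D mik mji vik vji pRR
    · exact dkeyDD D mik mjj vik vjj pRB
    · exact dkeyDD D mik mjk vik vjk pRM
    · exact dkeyDD D mik mki vik vki pRR
    · exact dkeyDD D mik mkj vik vkj pRM
    · exact dkeyDD D mik mkk vik vkk pRC
    · exact dkeyDD D mji mii vji vii pRA
    · exact dkeyDD D mji mij vji vij pRR
    · exact dkeyDD D mji mik vji vik pRR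
    · exact dkeyDD D mji mji vji vji pRR
    · exact dkeyDD D mji mjj vji vjj pRB
    · exact dkeyDD D mji mjk vji vjk pRM
    · exact dkeyDD D mji mki vji vki pRR
    · exact dkeyDD D mji mkj vji vkj pRM
    · exact dkeyDD D mji mkk vji vkk pRC
    · exact dkeyDD D mjj mii vjj vii pBA
    · exact dkeyDD D mjj mij vjj vij pBR
    · exact dkeyDD D mjj mik vjj vik pBR
    · exact dkeyDD D mjj mji vjj vji pBR
    · exact dkeyDD D mjj mjj vjj vjj pBB
    · exact dkeyDD D mjj mjk vjj vjk pBM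
    · exact dkeyDD D mjj mki vjj vki pBR
    · exact dkeyDD D mjj mkj vjj vkj pBM
    · exact dkeyDD D mjj mkk vjj vkk pBC
    · exact dkeyDD D mjk mii vjk vii pMA
    · exact dkeyDD D mjk mij vjk vij pMR
    · exact dkeyDD D mjk mik vjk vik pMR
    · exact dkeyDD D mjk mji vjk vji pMR
    · exact dkeyDD D mjk mjj vjk vjj pMB
    · exact dkeyDD D mjk mjk vjk vjk pMM
    · exact dkeyDD D mjk mki vjk vki pMR
    · exact dkeyDD D mjk mkj vjk vkj pMM
    · exact dkeyDD D mjk mkk vjk vkk pMC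
    · exact dkeyDD D mki mii vki vii pRA
    · exact dkeyDD D mki mij vki vij pRR
    · exact dkeyDD D mki mik vki vik pRR
    · exact dkeyDD D mki mji vki vji pRR
    · exact dkeyDD D mki mjj vki vjj pRB
    · exact dkeyDD D mki mjk vki vjk pRM
    · exact dkeyDD D mki mki vki vki pRR
    · exact dkeyDD D mki mkj vki vkj pRM
    · exact dkeyDD D mki mkk vki vkk pRC
    · exact dkeyDD D mkj mii vkj vii pMA
    · exact dkeyDD D mkj mij vkj vij pMR
    · exact dkeyDD D mkj mik vkj vik pMR
    · exact dkeyDD D mkj mji vkj vji pMR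
    · exact dkeyDD D mkj mjj vkj vjj pMB
    · exact dkeyDD D mkj mjk vkj vjk pMM
    · exact dkeyDD D mkj mki vkj vki pMR
    · exact dkeyDD D mkj mkj vkj vkj pMM
    · exact dkeyDD D mkj mkk vkj vkk pMC
    · exact dkeyDD D mkk mii vkk vii pCA
    · exact dkeyDD D mkk mij vkk vij pCR
    · exact dkeyDD D mkk mik vkk vik pCR
    · exact dkeyDD D mkk mji vkk vji pCR
    · exact dkeyDD D mkk mjj vkk vjj pCB
    · exact dkeyDD D mkk mjk vkk vjk pCM
    · exact dkeyDD D mkk mki vkk vki pCR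
    · exact dkeyDD D mkk mkj vkk vkj pCM
    · exact dkeyDD D mkk mkk vkk vkk pCC
  · intro g hg
    simp only [Set.mem_insert_iff, Set.mem_singleton_iff] at hg
    rcases hg with rfl | rfl | rfl
    · rw [vii]; exact ⟨by decide, by decide⟩
    · rw [vjj]; exact ⟨by decide, by decide⟩
    · rw [vkk]; exact ⟨by decide, by decide⟩

private lemma main_caseDD {N : Type*} (D : DidendriticSystem N) (i j k : N)
    (hij : i ≠ j) (hjk : j ≠ k) (hik : i ≠ k)
    (h1 : D.eqv (i, j) (i, k)) (h2 : D.lt (i, j) (j, k)) : DGoalDD D {i, j, k} := by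
  have ejk : D.eqv (j, k) (k, j) := D.axA j k
  have pswap : ({i, k, j} : Set N) = {i, j, k} := by
    ext x; simp only [Set.mem_insert_iff, Set.mem_singleton_iff]; tauto
  rcases D.axB i j hij with ⟨r3, r4⟩ | ⟨r3, r4⟩ <;>
    rcases D.axB j k hjk with ⟨s3, s4⟩ | ⟨s3, s4⟩
  · exact coreLDD D i j k hij hjk hik h1 h2 r3 s3
  · exact goal_permDD D pswap (coreLDD D i k j hik (Ne.symm hjk) hij (D.iseqv.symm h1)
      (D.lt_congr _ _ _ _ h1 ejk h2) (D.ltL_congr _ _ _ _ h1 (D.iseqv.refl _) r3)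
      (D.ltL_congr _ _ _ _ ejk (D.iseqv.refl _) s4))
  · exact goal_permDD D pswap (coreRDD D i k j hik (Ne.symm hjk) hij (D.iseqv.symm h1)
      (D.lt_congr _ _ _ _ h1 ejk h2) (D.ltR_congr _ _ _ _ h1 (D.iseqv.refl _) r3)
      (D.ltR_congr _ _ _ _ ejk (D.iseqv.refl _) s4))
  · exact coreRDD D i j k hij hjk hik h1 h2 r3 s3

/-- In any didendritic system, for distinct labels `i, j, k` there is a bijection from
the equivalence classes `⟨g,h⟩`, `g,h ∈ {i,j,k}`, to the vertices of a full binary tree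
with exactly three leaves labeled `i`, `j`, `k`, preserving the three partial orders and
mapping each `⟨g,g⟩` to the leaf labeled `g`. -/
theorem didendritic_triple_tree {N : Type*} (D : DidendriticSystem N)
    (i j k : N) (hij : i ≠ j) (hjk : j ≠ k) (hik : i ≠ k) :
    ∃ (t : Finset (List Bool)) (φ : N × N → List Bool),
      FullBinTree t ∧ leafCount t = 3 ∧
      (∀ g ∈ ({i, j, k} : Set N), ∀ h ∈ ({i, j, k} : Set N), φ (g, h) ∈ t) ∧
      (∀ v ∈ t, ∃ g ∈ ({i, j, k} : Set N), ∃ h ∈ ({i, j, k} : Set N), φ (g, h) = v) ∧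
      (∀ g h g' h' : N, g ∈ ({i, j, k} : Set N) → h ∈ ({i, j, k} : Set N) →
        g' ∈ ({i, j, k} : Set N) → h' ∈ ({i, j, k} : Set N) →
        (φ (g, h) = φ (g', h') ↔ D.eqv (g, h) (g', h')) ∧
        (D.ltL (g, h) (g', h') ↔ treeLtL (φ (g, h)) (φ (g', h'))) ∧
        (D.ltR (g, h) (g', h') ↔ treeLtR (φ (g, h)) (φ (g', h'))) ∧
        (D.lt (g, h) (g', h') ↔ treeLt (φ (g, h)) (φ (g', h')))) ∧
      (∀ g ∈ ({i, j, k} : Set N), IsTreeLeaf t (φ (g, g))) := by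
  show DGoalDD D {i, j, k}
  rcases D.axC i j k hij hjk hik with ⟨⟨c1, c2⟩, -, -⟩ | ⟨-, ⟨c1, c2⟩, -⟩ | ⟨-, -, ⟨c1, c2⟩⟩
  · exact main_caseDD D i j k hij hjk hik c1 c2
  · exact goal_permDD D
      (by ext x; simp only [Set.mem_insert_iff, Set.mem_singleton_iff]; tauto)
      (main_caseDD D j k i hjk (Ne.symm hik) (Ne.symm hij) c1 c2)
  · exact goal_permDD D
      (by ext x; simp only [Set.mem_insert_iff, Set.mem_singleton_iff]; tauto)
      (main_caseDD D k i j (Ne.symm hik) hij (Ne.symm hjk) c1 c2)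
end

section
/- Every didendritic system with a finite label set is isomorphic to a unique leaf-labeled full binary tree via a unique isomorphism: there is a bijection ψ from the equivalence classes to the vertices of a full binary tree with leaves bijectively labeled by N, preserving the partial orders <_L, <_R, < and sending each singleton class ⟨i,i⟩ to the leaf labeled i. -/
/-- `ψ` realizes the didendritic system `D` as the leaf-labeled full binary tree `t`:
it is a bijection from the equivalence classes of `D` onto the vertices of `t`,
preserving the three partial orders, mapping each singleton class `⟨i,i⟩` to a leaf and
hitting every leaf by some singleton class (so the leaves are bijectively labeled). -/
def IsoSpec {N : Type*} (D : DidendriticSystem N)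
    (t : Finset (List Bool)) (ψ : N × N → List Bool) : Prop :=
  FullBinTree t ∧
  (∀ p : N × N, ψ p ∈ t) ∧
  (∀ v ∈ t, ∃ p : N × N, ψ p = v) ∧
  (∀ p q : N × N, ψ p = ψ q ↔ D.eqv p q) ∧
  (∀ p q : N × N, D.ltL p q ↔ treeLtL (ψ p) (ψ q)) ∧
  (∀ p q : N × N, D.ltR p q ↔ treeLtR (ψ p) (ψ q)) ∧
  (∀ p q : N × N, D.lt p q ↔ treeLt (ψ p) (ψ q)) ∧
  (∀ i : N, IsTreeLeaf t (ψ (i, i))) ∧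
  (∀ v ∈ t, IsTreeLeaf t v → ∃ i : N, ψ (i, i) = v)

set_option linter.unusedSectionVars false
namespace DidHelp

attribute [local instance] Classical.propDecidable

variable {N : Type} [Fintype N] (D : DidendriticSystem N)

lemma lt_of_ltL {a b : N × N} (h : D.ltL a b) : D.lt a b := (D.axD a b).2.mpr (Or.inl h)
lemma lt_of_ltR {a b : N × N} (h : D.ltR a b) : D.lt a b := (D.axD a b).2.mpr (Or.inr h)
lemma ltLR {a b : N × N} (h : D.lt a b) : D.ltL a b ∨ D.ltR a b := (D.axD a b).2.mp h
lemma not_both {a b : N × N} : ¬(D.ltL a b ∧ D.ltR a b) := (D.axD a b).1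
lemma lt_irr {a : N × N} : ¬ D.lt a a := D.lt_irrefl a a (D.iseqv.refl a)

lemma eqv_or_lt_trans {r p z : N × N} (h : D.lt r p) (h2 : D.eqv p z ∨ D.lt p z) :
    D.lt r z :=
  h2.elim (fun e => D.lt_congr r r p z (D.iseqv.refl r) e h) (fun l => D.lt_trans r p z h l)

lemma ltR_ext {r p z : N × N} (h : D.ltR r p) (h2 : D.eqv p z ∨ D.lt p z) : D.ltR r z :=
  h2.elim (fun e => D.ltR_congr r r p z (D.iseqv.refl r) e h) (fun l => (D.axE r p z).2 h l)

lemma ltL_ext {r p z : N × N} (h : D.ltL r p) (h2 : D.eqv p z ∨ D.lt p z) : D.ltL r z :=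
  h2.elim (fun e => D.ltL_congr r r p z (D.iseqv.refl r) e h) (fun l => (D.axE r p z).1 h l)

lemma lt_pair_left {i j : N} (h : i ≠ j) : D.lt (i, j) (i, i) := by
  rcases D.axB i j h with ⟨hL, _⟩ | ⟨hR, _⟩
  · exact lt_of_ltL D hL
  · exact lt_of_ltR D hR

lemma lt_pair_right {i j : N} (h : i ≠ j) : D.lt (i, j) (j, j) := by
  rcases D.axB i j h with ⟨_, hR⟩ | ⟨_, hL⟩
  · exact lt_of_ltR D hR
  · exact lt_of_ltL D hL

lemma leaf_max_leaf (i k : N) : ¬ D.lt (i, i) (k, k) := by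
  intro h
  have hik : i ≠ k := by rintro rfl; exact lt_irr D h
  rcases D.axB i k hik with ⟨hL, hR⟩ | ⟨hR, hL⟩
  · exact not_both D ⟨(D.axE (i, k) (i, i) (k, k)).1 hL h, hR⟩
  · exact not_both D ⟨hL, (D.axE (i, k) (i, i) (k, k)).2 hR h⟩

lemma leaf_max (i : N) (q : N × N) : ¬ D.lt (i, i) q := by
  obtain ⟨k, l⟩ := q
  intro h
  by_cases hkl : k = l
  · subst hkl; exact leaf_max_leaf D i k h
  · exact leaf_max_leaf D i k (D.lt_trans _ _ _ h (lt_pair_left D hkl))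

/-- Classes sharing a label are comparable. -/
lemma cmp_share (i j k : N) :
    D.eqv (i, j) (i, k) ∨ D.lt (i, j) (i, k) ∨ D.lt (i, k) (i, j) := by
  by_cases hjk : j = k
  · subst hjk; exact Or.inl (D.iseqv.refl _)
  by_cases hij : i = j
  · subst hij
    have hik : i ≠ k := hjk
    exact Or.inr (Or.inr (lt_pair_left D hik))
  by_cases hik : i = k
  · subst hik
    exact Or.inr (Or.inl (lt_pair_left D hij))
  rcases D.axC i j k hij hjk hik with ⟨⟨he, _⟩, _, _⟩ | ⟨_, ⟨he, hlt⟩, _⟩ | ⟨_, _, ⟨he, hlt⟩⟩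
  · exact Or.inl he
  · refine Or.inr (Or.inl (D.lt_congr (j, k) (i, j) (k, i) (i, k) ?_ (D.axA k i) hlt))
    exact D.iseqv.trans he (D.axA j i)
  · exact Or.inr (Or.inr (D.lt_congr (k, i) (i, k) (i, j) (i, j) (D.axA k i) (D.iseqv.refl _) hlt))

/-- Every strict ancestor of a leaf class shares its label. -/
lemma anc_repr {i j m : N} (h : D.lt (i, j) (m, m)) : ∃ x, D.eqv (i, j) (x, m) := by
  have hij : i ≠ j := by rintro rfl; exact absurd h (leaf_max D i _)
  by_cases him : i = m
  · subst him; exact ⟨j, D.axA i j⟩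
  by_cases hjm : j = m
  · subst hjm; exact ⟨i, D.iseqv.refl _⟩
  rcases D.axC i j m hij hjm him with ⟨⟨he, _⟩, _, _⟩ | ⟨_, ⟨he, hlt⟩, _⟩ | ⟨_, _, ⟨he, hlt⟩⟩
  · exact ⟨i, he⟩
  · exact ⟨j, D.iseqv.trans (D.axA i j) (D.iseqv.symm he)⟩
  · -- contradiction case
    exfalso
    have h1 : D.lt (i, j) (i, i) := lt_pair_left D hij
    rcases ltLR D hlt with hs | hs
    · have a : D.ltL (i, m) (i, i) :=
        D.ltL_congr (m, i) (i, m) (i, i) (i, i) (D.axA m i) (D.iseqv.refl _)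
          ((D.axE (m, i) (i, j) (i, i)).1 hs h1)
      have b : D.ltL (i, m) (m, m) :=
        D.ltL_congr (m, i) (i, m) (m, m) (m, m) (D.axA m i) (D.iseqv.refl _)
          ((D.axE (m, i) (i, j) (m, m)).1 hs h)
      rcases D.axB i m him with ⟨_, cR⟩ | ⟨cR, _⟩
      · exact not_both D ⟨b, cR⟩
      · exact not_both D ⟨a, cR⟩
    · have a : D.ltR (i, m) (i, i) :=
        D.ltR_congr (m, i) (i, m) (i, i) (i, i) (D.axA m i) (D.iseqv.refl _)
          ((D.axE (m, i) (i, j) (i, i)).2 hs h1)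
      have b : D.ltR (i, m) (m, m) :=
        D.ltR_congr (m, i) (i, m) (m, m) (m, m) (D.axA m i) (D.iseqv.refl _)
          ((D.axE (m, i) (i, j) (m, m)).2 hs h)
      rcases D.axB i m him with ⟨cL, _⟩ | ⟨_, cL⟩
      · exact not_both D ⟨cL, a⟩
      · exact not_both D ⟨cL, b⟩

/-- Ancestors of a common class are comparable. -/
lemma cmp_below {a b c : N × N} (ha : D.lt a c) (hb : D.lt b c) :
    D.eqv a b ∨ D.lt a b ∨ D.lt b a := by
  obtain ⟨m, n⟩ := c
  have ha' : D.lt a (m, m) := by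
    by_cases hmn : m = n
    · subst hmn; exact ha
    · exact D.lt_trans _ _ _ ha (lt_pair_left D hmn)
  have hb' : D.lt b (m, m) := by
    by_cases hmn : m = n
    · subst hmn; exact hb
    · exact D.lt_trans _ _ _ hb (lt_pair_left D hmn)
  obtain ⟨a1, a2⟩ := a
  obtain ⟨b1, b2⟩ := b
  obtain ⟨x, hx⟩ := anc_repr D ha'
  obtain ⟨y, hy⟩ := anc_repr D hb'
  have hx' : D.eqv (a1, a2) (m, x) := D.iseqv.trans hx (D.axA x m)
  have hy' : D.eqv (b1, b2) (m, y) := D.iseqv.trans hy (D.axA y m)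
  rcases cmp_share D m x y with he | hlt | hlt
  · exact Or.inl (D.iseqv.trans hx' (D.iseqv.trans he (D.iseqv.symm hy')))
  · exact Or.inr (Or.inl (D.lt_congr (m, x) _ (m, y) _ (D.iseqv.symm hx') (D.iseqv.symm hy') hlt))
  · exact Or.inr (Or.inr (D.lt_congr (m, y) _ (m, x) _ (D.iseqv.symm hy') (D.iseqv.symm hx') hlt))

open Classical in
/-- The equivalence class of a pair, as a finset. -/
noncomputable def cls (D : DidendriticSystem N) (p : N × N) : Finset (N × N) :=
  Finset.univ.filter (fun r => D.eqv r p)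

open Classical in
noncomputable def below (D : DidendriticSystem N) (p : N × N) : Finset (N × N) :=
  Finset.univ.filter (fun r => D.lt r p)

open Classical in
noncomputable def clsBelow (D : DidendriticSystem N) (p : N × N) : Finset (Finset (N × N)) :=
  (below D p).image (cls D)

noncomputable def depth (D : DidendriticSystem N) (p : N × N) : ℕ := (clsBelow D p).card

lemma mem_below {p r : N × N} : r ∈ below D p ↔ D.lt r p := by
  unfold below
  simp

lemma cls_eq_iff {p q : N × N} : cls D p = cls D q ↔ D.eqv p q := by
  classical
  constructor
  · intro h
    have hp : p ∈ cls D p := by simp [cls, D.iseqv.refl]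
    rw [h] at hp
    simpa [cls] using hp
  · intro h
    ext r
    simp only [cls, Finset.mem_filter, Finset.mem_univ, true_and]
    exact ⟨fun h' => D.iseqv.trans h' h, fun h' => D.iseqv.trans h' (D.iseqv.symm h)⟩

lemma mem_clsBelow {p : N × N} {x : Finset (N × N)} :
    x ∈ clsBelow D p ↔ ∃ r, D.lt r p ∧ cls D r = x := by
  classical
  simp [clsBelow, below, Finset.mem_image, and_comm]

lemma below_congr {p q : N × N} (h : D.eqv p q) : below D p = below D q := by
  ext r
  rw [mem_below, mem_below]
  exact ⟨fun h' => eqv_or_lt_trans D h' (Or.inl h),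
    fun h' => eqv_or_lt_trans D h' (Or.inl (D.iseqv.symm h))⟩

lemma depth_congr {p q : N × N} (h : D.eqv p q) : depth D p = depth D q := by
  unfold depth clsBelow
  rw [below_congr D h]

lemma clsBelow_mono {q p : N × N} (h : D.lt q p) : clsBelow D q ⊆ clsBelow D p := by
  intro x hx
  rw [mem_clsBelow] at hx ⊢
  obtain ⟨r, hr, hc⟩ := hx
  exact ⟨r, D.lt_trans _ _ _ hr h, hc⟩

lemma cls_mem_clsBelow {q p : N × N} (h : D.lt q p) : cls D q ∈ clsBelow D p :=
  (mem_clsBelow D).mpr ⟨q, h, rfl⟩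

lemma cls_not_mem_self {q : N × N} : cls D q ∉ clsBelow D q := by
  rw [mem_clsBelow]
  rintro ⟨r, hr, hc⟩
  exact D.lt_irrefl r q ((cls_eq_iff D).mp hc) hr

lemma depth_lt {q p : N × N} (h : D.lt q p) : depth D q < depth D p :=
  Finset.card_lt_card ⟨clsBelow_mono D h,
    fun hsub => cls_not_mem_self D (hsub (cls_mem_clsBelow D h))⟩

lemma depth_inj {q q' p : N × N} (hq : D.lt q p) (hq' : D.lt q' p)
    (h : depth D q = depth D q') : D.eqv q q' := by
  rcases cmp_below D hq hq' with he | hlt | hlt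
  · exact he
  · exact absurd h (Nat.ne_of_lt (depth_lt D hlt))
  · exact absurd h.symm (Nat.ne_of_lt (depth_lt D hlt))

lemma depth_pos_anc {p : N × N} (h : 0 < depth D p) : ∃ q, D.lt q p := by
  classical
  rcases Finset.card_pos.mp h with ⟨x, hx⟩
  rcases (mem_clsBelow D).mp hx with ⟨r, hr, _⟩
  exact ⟨r, hr⟩

lemma exists_at_depth : ∀ n : ℕ, ∀ p : N × N, depth D p = n →
    ∀ k < n, ∃ r, D.lt r p ∧ depth D r = k := by
  intro n
  induction n using Nat.strong_induction_on with
  | _ n ih =>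
    intro p hdp k hk
    classical
    have hpos : 0 < depth D p := by omega
    obtain ⟨q1, hq1⟩ := depth_pos_anc D hpos
    -- pick an ancestor of maximal depth
    have hne : (below D p).Nonempty := ⟨q1, (mem_below D).mpr hq1⟩
    obtain ⟨q0, hq0mem, hq0max⟩ := Finset.exists_max_image (below D p) (depth D) hne
    have hq0 : D.lt q0 p := (mem_below D).mp hq0mem
    have hsub : clsBelow D p ⊆ insert (cls D q0) (clsBelow D q0) := by
      intro x hx
      rcases (mem_clsBelow D).mp hx with ⟨r, hr, hc⟩
      rcases cmp_below D hr hq0 with he | hlt | hlt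
      · have hx0 : x = cls D q0 := by rw [← hc]; exact (cls_eq_iff D).mpr he
        exact Finset.mem_insert.mpr (Or.inl hx0)
      · exact Finset.mem_insert.mpr (Or.inr ((mem_clsBelow D).mpr ⟨r, hlt, hc⟩))
      · exact absurd (hq0max r ((mem_below D).mpr hr)) (not_le.mpr (depth_lt D hlt))
    have hcard : depth D p ≤ depth D q0 + 1 :=
      le_trans (Finset.card_le_card hsub) (Finset.card_insert_le _ _)
    have hd0 : depth D q0 < depth D p := depth_lt D hq0
    have hd0' : depth D q0 = n - 1 := by omega
    by_cases hkq : k = depth D q0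
    · exact ⟨q0, hq0, hkq.symm⟩
    · have hk' : k < depth D q0 := by omega
      obtain ⟨r, hr, hdr⟩ := ih (depth D q0) (by omega) q0 rfl k hk'
      exact ⟨r, D.lt_trans _ _ _ hr hq0, hdr⟩
/-- The meet of two incomparable classes. -/
lemma meet {p q : N × N} (hne : ¬ D.eqv p q) (h1 : ¬ D.lt p q) (h2 : ¬ D.lt q p) :
    ∃ r, D.lt r p ∧ D.lt r q ∧
      ((D.ltL r p ∧ D.ltR r q) ∨ (D.ltR r p ∧ D.ltL r q)) := by
  obtain ⟨i, j⟩ := p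
  obtain ⟨k, l⟩ := q
  have hik : i ≠ k := by
    rintro rfl
    rcases cmp_share D i j l with he | hl | hl
    · exact hne he
    · exact h1 hl
    · exact h2 hl
  have hri : D.lt (i, k) (i, i) := lt_pair_left D hik
  have hrk : D.lt (i, k) (k, k) := lt_pair_right D hik
  have hqk : D.eqv (k, l) (k, k) ∨ D.lt (k, l) (k, k) := by
    by_cases hkl : k = l
    · subst hkl; exact Or.inl (D.iseqv.refl _)
    · exact Or.inr (lt_pair_left D hkl)
  have hpi : D.eqv (i, j) (i, i) ∨ D.lt (i, j) (i, i) := by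
    by_cases hij : i = j
    · subst hij; exact Or.inl (D.iseqv.refl _)
    · exact Or.inr (lt_pair_left D hij)
  -- if (i,j) is below-or-equal (k,k), contradiction
  have haux : ¬ (D.eqv (i, j) (i, k) ∨ D.lt (i, j) (i, k)) := by
    rintro hor
    have hpkk : D.lt (i, j) (k, k) := by
      rcases hor with he | hl
      · exact D.lt_congr (i, k) (i, j) (k, k) (k, k) (D.iseqv.symm he) (D.iseqv.refl _) hrk
      · exact D.lt_trans _ _ _ hl hrk
    rcases hqk with he | hl
    · exact h1 (eqv_or_lt_trans D hpkk (Or.inl (D.iseqv.symm he)))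
    · rcases cmp_below D hpkk hl with he' | hl' | hl'
      · exact hne he'
      · exact h1 hl'
      · exact h2 hl'
  have hrp : D.lt (i, k) (i, j) := by
    rcases cmp_share D i k j with he | hl | hl
    · exact absurd (Or.inl (D.iseqv.symm he)) haux
    · exact hl
    · exact absurd (Or.inr hl) haux
  have haux' : ¬ (D.eqv (k, l) (k, i) ∨ D.lt (k, l) (k, i)) := by
    rintro hor
    have hqii : D.lt (k, l) (i, i) := by
      have hki : D.lt (k, i) (i, i) :=
        D.lt_congr (i, k) (k, i) (i, i) (i, i) (D.axA i k) (D.iseqv.refl _) hri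
      rcases hor with he | hl
      · exact D.lt_congr (k, i) (k, l) (i, i) (i, i) (D.iseqv.symm he) (D.iseqv.refl _) hki
      · exact D.lt_trans _ _ _ hl hki
    rcases hpi with he | hl
    · exact h2 (eqv_or_lt_trans D hqii (Or.inl (D.iseqv.symm he)))
    · rcases cmp_below D hqii hl with he' | hl' | hl'
      · exact hne (D.iseqv.symm he')
      · exact h2 hl'
      · exact h1 hl'
  have hrq : D.lt (i, k) (k, l) := by
    rcases cmp_share D k i l with he | hl | hl
    · exact absurd (Or.inl (D.iseqv.symm he)) haux'
    · exact D.lt_congr (k, i) (i, k) (k, l) (k, l) (D.axA k i) (D.iseqv.refl _) hl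
    · exact absurd (Or.inr hl) haux'
  refine ⟨(i, k), hrp, hrq, ?_⟩
  rcases D.axB i k hik with ⟨cL, cR⟩ | ⟨cR, cL⟩
  · -- ltL (i,k) (i,i), ltR (i,k) (k,k)
    left
    constructor
    · rcases ltLR D hrp with hs | hs
      · exact hs
      · exact absurd ⟨cL, ltR_ext D hs hpi⟩ (not_both D)
    · rcases ltLR D hrq with hs | hs
      · exact absurd ⟨ltL_ext D hs hqk, cR⟩ (not_both D)
      · exact hs
  · -- ltR (i,k) (i,i), ltL (i,k) (k,k)
    right
    constructor
    · rcases ltLR D hrp with hs | hs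
      · exact absurd ⟨ltL_ext D hs hpi, cR⟩ (not_both D)
      · exact hs
    · rcases ltLR D hrq with hs | hs
      · exact hs
      · exact absurd ⟨cL, ltR_ext D hs hqk⟩ (not_both D)

open Classical in
/-- The word (tree vertex) associated to a class. -/
noncomputable def wrd (D : DidendriticSystem N) (p : N × N) : List Bool :=
  (List.range (depth D p)).map fun k => decide (∃ r, D.lt r p ∧ depth D r = k ∧ D.ltR r p)

lemma length_wrd (p : N × N) : (wrd D p).length = depth D p := by simp [wrd]

lemma getElem_wrd {p r : N × N} (h : D.lt r p) {k : ℕ} (hk : depth D r = k)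
    (hb : k < (wrd D p).length) :
    (wrd D p)[k] = decide (D.ltR r p) := by
  classical
  subst hk
  simp only [wrd, List.getElem_map, List.getElem_range, decide_eq_decide]
  constructor
  · rintro ⟨r', hr', hd', hR'⟩
    exact D.ltR_congr r' r p p (depth_inj D hr' h hd') (D.iseqv.refl p) hR'
  · intro hR; exact ⟨r, h, rfl, hR⟩

lemma side_iff {r p q : N × N} (hrp : D.lt r p) (hpq : D.lt p q) :
    D.ltR r p ↔ D.ltR r q := by
  constructor
  · intro hs; exact ltR_ext D hs (Or.inr hpq)
  · intro hs
    rcases ltLR D hrp with hL | hR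
    · exact absurd ⟨ltL_ext D hL (Or.inr hpq), hs⟩ (not_both D)
    · exact hR

lemma wrd_take_succ {p q : N × N} (h : D.lt p q) :
    wrd D p ++ [decide (D.ltR p q)] = (wrd D q).take (depth D p + 1) := by
  classical
  have hdq : depth D p < depth D q := depth_lt D h
  apply List.ext_getElem
  · simp [length_wrd]; omega
  intro n h1 h2
  rw [List.getElem_take]
  by_cases hn : n < depth D p
  · obtain ⟨r, hr, hdr⟩ := exists_at_depth D (depth D p) p rfl n hn
    have hbp : n < (wrd D p).length := by rw [length_wrd]; exact hn
    have hbq : n < (wrd D q).length := by rw [length_wrd]; omega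
    rw [List.getElem_append_left hbp]
    rw [getElem_wrd D hr hdr hbp, getElem_wrd D (D.lt_trans _ _ _ hr h) hdr hbq,
      decide_eq_decide]
    exact side_iff D hr h
  · have hn' : n = depth D p := by
      have := h1
      simp only [List.length_append, length_wrd, List.length_cons, List.length_nil] at this
      omega
    subst hn'
    have hbq : depth D p < (wrd D q).length := by rw [length_wrd]; omega
    rw [getElem_wrd D h rfl hbq]
    have : (wrd D p ++ [decide (D.ltR p q)])[(wrd D p).length]'(by
      simp) = decide (D.ltR p q) := by
      rw [List.getElem_append_right (le_refl _)]
      simp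
    simpa [length_wrd] using this

lemma wrd_prefix_of_lt {p q : N × N} (h : D.lt p q) :
    wrd D p ++ [decide (D.ltR p q)] <+: wrd D q := by
  rw [wrd_take_succ D h]; exact List.take_prefix _ _

lemma wrd_prefix {p q : N × N} (h : D.lt p q) : wrd D p <+: wrd D q :=
  (List.prefix_append _ _).trans (wrd_prefix_of_lt D h)

lemma wrd_congr {p q : N × N} (h : D.eqv p q) : wrd D p = wrd D q := by
  classical
  have hf : (fun k => decide (∃ r, D.lt r p ∧ depth D r = k ∧ D.ltR r p)) =
      (fun k => decide (∃ r, D.lt r q ∧ depth D r = k ∧ D.ltR r q)) := by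
    funext k
    rw [decide_eq_decide]
    constructor
    · rintro ⟨r, h1, h2, h3⟩
      exact ⟨r, eqv_or_lt_trans D h1 (Or.inl h), h2, ltR_ext D h3 (Or.inl h)⟩
    · rintro ⟨r, h1, h2, h3⟩
      exact ⟨r, eqv_or_lt_trans D h1 (Or.inl (D.iseqv.symm h)), h2,
        ltR_ext D h3 (Or.inl (D.iseqv.symm h))⟩
  unfold wrd
  rw [depth_congr D h, hf]

lemma wrd_inj {p q : N × N} (h : wrd D p = wrd D q) : D.eqv p q := by
  by_contra hne
  have hd : depth D p = depth D q := by rw [← length_wrd D p, ← length_wrd D q, h]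
  have h1 : ¬ D.lt p q := fun hl => absurd hd (Nat.ne_of_lt (depth_lt D hl))
  have h2 : ¬ D.lt q p := fun hl => absurd hd.symm (Nat.ne_of_lt (depth_lt D hl))
  obtain ⟨r, hrp, hrq, hside⟩ := meet D hne h1 h2
  have hk : depth D r < (wrd D p).length := by rw [length_wrd]; exact depth_lt D hrp
  have hk' : depth D r < (wrd D q).length := by rw [length_wrd]; exact depth_lt D hrq
  have e1 : (wrd D p)[depth D r]? = some (decide (D.ltR r p)) := by
    rw [List.getElem?_eq_getElem hk, getElem_wrd D hrp rfl hk]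
  have e2 : (wrd D q)[depth D r]? = some (decide (D.ltR r q)) := by
    rw [List.getElem?_eq_getElem hk', getElem_wrd D hrq rfl hk']
  rw [h, e2] at e1
  have hde : decide (D.ltR r q) = decide (D.ltR r p) := by injection e1
  rcases hside with ⟨hL, hR⟩ | ⟨hR, hL⟩
  · have : ¬ D.ltR r p := fun hx => not_both D ⟨hL, hx⟩
    simp [hR, this] at hde
  · have : ¬ D.ltR r q := fun hx => not_both D ⟨hL, hx⟩
    simp [hR, this] at hde

lemma lt_of_treeLt {p q : N × N} (h : treeLt (wrd D p) (wrd D q)) : D.lt p q := by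
  obtain ⟨hpre, hne⟩ := h
  by_contra hl
  have hne' : ¬ D.eqv p q := fun he => hne (wrd_congr D he)
  have h2 : ¬ D.lt q p := by
    intro hqp
    have ha := hpre.length_le
    have hb : depth D q < depth D p := depth_lt D hqp
    rw [length_wrd, length_wrd] at ha
    omega
  obtain ⟨r, hrp, hrq, hside⟩ := meet D hne' hl h2
  have hk : depth D r < (wrd D p).length := by rw [length_wrd]; exact depth_lt D hrp
  have hk' : depth D r < (wrd D q).length := by rw [length_wrd]; exact depth_lt D hrq
  have e1 : (wrd D p)[depth D r]? = some (decide (D.ltR r p)) := by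
    rw [List.getElem?_eq_getElem hk, getElem_wrd D hrp rfl hk]
  have e2 : (wrd D q)[depth D r]? = some (decide (D.ltR r q)) := by
    rw [List.getElem?_eq_getElem hk', getElem_wrd D hrq rfl hk']
  have hpq : (wrd D p)[depth D r]? = (wrd D q)[depth D r]? := by
    obtain ⟨tl, htl⟩ := hpre
    rw [← htl]
    rw [List.getElem?_append_left hk]
  rw [hpq, e2] at e1
  have hde : decide (D.ltR r q) = decide (D.ltR r p) := by injection e1
  rcases hside with ⟨hL, hR⟩ | ⟨hR, hL⟩
  · have : ¬ D.ltR r p := fun hx => not_both D ⟨hL, hx⟩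
    simp [hR, this] at hde
  · have : ¬ D.ltR r q := fun hx => not_both D ⟨hL, hx⟩
    simp [hR, this] at hde

lemma pref_len_eq {α : Type*} {l l₁ l₂ : List α} (h₁ : l₁ <+: l) (h₂ : l₂ <+: l)
    (h : l₁.length = l₂.length) : l₁ = l₂ := by
  rw [List.prefix_iff_eq_take] at h₁ h₂
  rw [h₁, h₂, h]

lemma treeLt_iff {p q : N × N} : D.lt p q ↔ treeLt (wrd D p) (wrd D q) := by
  constructor
  · intro h
    refine ⟨wrd_prefix D h, ?_⟩
    intro he
    have := depth_lt D h
    rw [← length_wrd D p, ← length_wrd D q, he] at this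
    omega
  · exact lt_of_treeLt D

lemma treeLtR_iff {p q : N × N} : D.ltR p q ↔ treeLtR (wrd D p) (wrd D q) := by
  constructor
  · intro h
    have hx := wrd_prefix_of_lt D (lt_of_ltR D h)
    rw [decide_eq_true h] at hx
    exact hx
  · intro h
    have hlt : D.lt p q := by
      apply lt_of_treeLt D
      constructor
      · exact (List.prefix_append _ _).trans h
      · intro he
        have hle := h.length_le
        rw [← he] at hle
        simp only [List.length_append, List.length_cons, List.length_nil] at hle
        omega
    rcases ltLR D hlt with hL | hR
    · exfalso
      have hfalse := wrd_prefix_of_lt D hlt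
      have hdec : decide (D.ltR p q) = false := by
        simp only [decide_eq_false_iff_not]
        exact fun hx => not_both D ⟨hL, hx⟩
      rw [hdec] at hfalse
      have := pref_len_eq h hfalse (by simp)
      have h2 := List.append_cancel_left this
      simp at h2
    · exact hR

lemma treeLtL_iff {p q : N × N} : D.ltL p q ↔ treeLtL (wrd D p) (wrd D q) := by
  constructor
  · intro h
    have := wrd_prefix_of_lt D (lt_of_ltL D h)
    have hdec : decide (D.ltR p q) = false := by
      simp only [decide_eq_false_iff_not]
      exact fun hx => not_both D ⟨h, hx⟩
    rw [hdec] at this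
    exact this
  · intro h
    have hlt : D.lt p q := by
      apply lt_of_treeLt D
      constructor
      · exact (List.prefix_append _ _).trans h
      · intro he
        have hle := h.length_le
        rw [← he] at hle
        simp only [List.length_append, List.length_cons, List.length_nil] at hle
        omega
    rcases ltLR D hlt with hL | hR
    · exact hL
    · exfalso
      have hfalse := wrd_prefix_of_lt D hlt
      have hdec : decide (D.ltR p q) = true := decide_eq_true hR
      rw [hdec] at hfalse
      have := pref_len_eq h hfalse (by simp)
      have h2 := List.append_cancel_left this
      simp at h2
lemma nonmax {p q : N × N} (h : D.lt p q) :
    (∃ a, D.ltL p a) ∧ (∃ b, D.ltR p b) := by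
  obtain ⟨i, j⟩ := p
  have hij : i ≠ j := by rintro rfl; exact leaf_max D i q h
  rcases D.axB i j hij with ⟨hL, hR⟩ | ⟨hR, hL⟩
  · exact ⟨⟨(i, i), hL⟩, ⟨(j, j), hR⟩⟩
  · exact ⟨⟨(j, j), hL⟩, ⟨(i, i), hR⟩⟩

open Classical in
/-- The tree associated to a didendritic system. -/
noncomputable def tr (D : DidendriticSystem N) : Finset (List Bool) :=
  Finset.univ.image (wrd D)

lemma mem_tr {v : List Bool} : v ∈ tr D ↔ ∃ p, wrd D p = v := by
  classical
  simp [tr]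

lemma tr_prefixClosed : PrefixClosed ↑(tr D) := by
  intro v hv u hu
  rw [Finset.mem_coe, mem_tr] at hv ⊢
  obtain ⟨p, rfl⟩ := hv
  by_cases he : u = wrd D p
  · exact ⟨p, he.symm⟩
  · have hlen : u.length < (wrd D p).length :=
      lt_of_le_of_ne hu.length_le
        (fun hl => he (pref_len_eq hu (List.prefix_refl _) hl))
    rw [length_wrd] at hlen
    obtain ⟨r, hr, hdr⟩ := exists_at_depth D (depth D p) p rfl u.length hlen
    refine ⟨r, ?_⟩
    exact pref_len_eq (wrd_prefix D hr) hu (by rw [length_wrd, hdr])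

lemma wrd_leaf (i : N) : IsTreeLeaf (tr D) (wrd D (i, i)) := by
  refine ⟨(mem_tr D).mpr ⟨(i, i), rfl⟩, ?_⟩
  intro w hw hpre
  rcases (mem_tr D).mp hw with ⟨q, rfl⟩
  by_contra hne
  exact leaf_max D i q (lt_of_treeLt D ⟨hpre, fun e => hne e.symm⟩)

lemma iso_exists [Nonempty N] : IsoSpec D (tr D) (wrd D) := by
  have hPC : PrefixClosed ↑(tr D) := tr_prefixClosed D
  refine ⟨⟨?_, hPC, ?_⟩, ?_, ?_, ?_, ?_, ?_, ?_, ?_, ?_⟩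
  · obtain ⟨i⟩ := (inferInstance : Nonempty N)
    exact ⟨wrd D (i, i), (mem_tr D).mpr ⟨(i, i), rfl⟩⟩
  · -- children
    intro v hv hch
    rcases (mem_tr D).mp hv with ⟨p, rfl⟩
    have hex : ∃ q, D.lt p q := by
      rcases hch with hc | hc
      · rcases (mem_tr D).mp hc with ⟨q, hq⟩
        refine ⟨q, lt_of_treeLt D ⟨?_, ?_⟩⟩
        · rw [hq]; exact List.prefix_append _ _
        · intro he
          rw [← he] at hq
          have := congrArg List.length hq
          simp at this
      · rcases (mem_tr D).mp hc with ⟨q, hq⟩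
        refine ⟨q, lt_of_treeLt D ⟨?_, ?_⟩⟩
        · rw [hq]; exact List.prefix_append _ _
        · intro he
          rw [← he] at hq
          have := congrArg List.length hq
          simp at this
    obtain ⟨q, hq⟩ := hex
    obtain ⟨⟨a, hLa⟩, ⟨b, hRb⟩⟩ := nonmax D hq
    constructor
    · have := hPC (wrd D a) (Finset.mem_coe.mpr ((mem_tr D).mpr ⟨a, rfl⟩)) _
        ((treeLtL_iff D).mp hLa)
      exact Finset.mem_coe.mp this
    · have := hPC (wrd D b) (Finset.mem_coe.mpr ((mem_tr D).mpr ⟨b, rfl⟩)) _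
        ((treeLtR_iff D).mp hRb)
      exact Finset.mem_coe.mp this
  · exact fun p => (mem_tr D).mpr ⟨p, rfl⟩
  · exact fun v hv => (mem_tr D).mp hv
  · exact fun p q => ⟨wrd_inj D, wrd_congr D⟩
  · exact fun p q => treeLtL_iff D
  · exact fun p q => treeLtR_iff D
  · exact fun p q => treeLt_iff D
  · exact fun i => wrd_leaf D i
  · intro v hv hleaf
    rcases (mem_tr D).mp hv with ⟨⟨i, j⟩, rfl⟩
    by_cases hij : i = j
    · subst hij; exact ⟨i, rfl⟩
    · exfalso
      have hlt : D.lt (i, j) (i, i) := lt_pair_left D hij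
      have hw := hleaf.2 (wrd D (i, i)) ((mem_tr D).mpr ⟨(i, i), rfl⟩)
        (wrd_prefix D hlt)
      have he := wrd_inj D hw
      exact D.lt_irrefl (i, j) (i, i) (D.iseqv.symm he) hlt

lemma card_image_rel {α β γ : Type*} [DecidableEq β] [DecidableEq γ]
    {s : Finset α} {f : α → β} {g : α → γ}
    (h : ∀ a ∈ s, ∀ b ∈ s, (f a = f b ↔ g a = g b)) :
    (s.image f).card = (s.image g).card := by
  classical
  apply Finset.card_bij (fun x hx => g (Finset.mem_image.mp hx).choose)
  · intro x hx
    obtain ⟨ha, _⟩ := (Finset.mem_image.mp hx).choose_spec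
    exact Finset.mem_image_of_mem g ha
  · intro x1 h1 x2 h2 heq
    obtain ⟨ha1, hf1⟩ := (Finset.mem_image.mp h1).choose_spec
    obtain ⟨ha2, hf2⟩ := (Finset.mem_image.mp h2).choose_spec
    rw [← hf1, ← hf2]
    exact (h _ ha1 _ ha2).mpr heq
  · intro y hy
    obtain ⟨b, hb, hgb⟩ := Finset.mem_image.mp hy
    refine ⟨f b, Finset.mem_image_of_mem f hb, ?_⟩
    obtain ⟨ha, hf⟩ := (Finset.mem_image.mp (Finset.mem_image_of_mem f hb)).choose_spec
    rw [← hgb]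
    exact (h _ ha _ hb).mp hf

lemma uniq_len {t' : Finset (List Bool)} {ψ : N × N → List Bool}
    (hs : IsoSpec D t' ψ) (p : N × N) : (ψ p).length = depth D p := by
  classical
  obtain ⟨⟨hne, hPC, hful⟩, hmem, hsurj, hinj, hLiff, hRiff, hltiff, hleaf, hleafsurj⟩ := hs
  have key : (below D p).image ψ =
      (Finset.range (ψ p).length).image (fun k => (ψ p).take k) := by
    ext u
    simp only [Finset.mem_image, Finset.mem_range, mem_below]
    constructor
    · rintro ⟨r, hr, rfl⟩
      obtain ⟨hpre, hne'⟩ := (hltiff r p).mp hr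
      refine ⟨(ψ r).length, ?_, ?_⟩
      · exact lt_of_le_of_ne hpre.length_le
          (fun hl => hne' (pref_len_eq hpre (List.prefix_refl _) hl))
      · exact (List.prefix_iff_eq_take.mp hpre).symm
    · rintro ⟨k, hk, rfl⟩
      have hpre : (ψ p).take k <+: ψ p := List.take_prefix _ _
      have hmem' : (ψ p).take k ∈ t' :=
        Finset.mem_coe.mp (hPC (ψ p) (Finset.mem_coe.mpr (hmem p)) _ hpre)
      obtain ⟨r, hr⟩ := hsurj _ hmem'
      refine ⟨r, ?_, hr⟩
      apply (hltiff r p).mpr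
      constructor
      · rw [hr]; exact hpre
      · rw [hr]
        intro he
        have := congrArg List.length he
        simp only [List.length_take] at this
        omega
  have c1 : ((Finset.range (ψ p).length).image (fun k => (ψ p).take k)).card
      = (ψ p).length := by
    rw [Finset.card_image_of_injOn, Finset.card_range]
    intro k hk k' hk' hkk
    have := congrArg List.length hkk
    simp only [List.length_take, Finset.coe_range, Set.mem_Iio] at this hk hk'
    omega
  have c2 : ((below D p).image ψ).card = ((below D p).image (cls D)).card := by
    apply card_image_rel
    intro a _ b _
    rw [hinj a b, cls_eq_iff D]
  unfold depth clsBelow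
  rw [← c2, key, c1]

lemma getElem_of_append_prefix {α : Type*} {l u : List α} {b : α} {k : ℕ}
    (h : u ++ [b] <+: l) (hk : k = u.length) (hkl : k < l.length) : l[k] = b := by
  obtain ⟨tl, htl⟩ := h
  subst hk
  have h2 : l[u.length]? = some b := by
    rw [← htl, List.getElem?_append_left (show u.length < (u ++ [b]).length by simp)]
    simp
  rw [List.getElem?_eq_getElem hkl] at h2
  exact Option.some.inj h2

lemma uniq_wrd {t' : Finset (List Bool)} {ψ : N × N → List Bool}
    (hs : IsoSpec D t' ψ) (p : N × N) : ψ p = wrd D p := by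
  have hlen : ∀ q, (ψ q).length = depth D q := uniq_len D hs
  obtain ⟨⟨hne, hPC, hful⟩, hmem, hsurj, hinj, hLiff, hRiff, hltiff, hleaf, hleafsurj⟩ := hs
  apply List.ext_getElem
  · rw [hlen, length_wrd]
  intro k h1 h2
  have hkd : k < depth D p := by rw [← hlen p]; exact h1
  obtain ⟨r, hr, hdr⟩ := exists_at_depth D (depth D p) p rfl k hkd
  have e2 : (wrd D p)[k] = decide (D.ltR r p) := getElem_wrd D hr hdr h2
  have hlr : (ψ r).length = k := by rw [hlen, hdr]
  rcases ltLR D hr with hL | hR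
  · have hpre : ψ r ++ [false] <+: ψ p := (hLiff r p).mp hL
    have e1 : (ψ p)[k] = false := getElem_of_append_prefix hpre hlr.symm h1
    have : ¬ D.ltR r p := fun hx => not_both D ⟨hL, hx⟩
    rw [e1, e2]
    simp [this]
  · have hpre : ψ r ++ [true] <+: ψ p := (hRiff r p).mp hR
    have e1 : (ψ p)[k] = true := getElem_of_append_prefix hpre hlr.symm h1
    rw [e1, e2]
    simp [hR]

lemma uniq_tr {t' : Finset (List Bool)} {ψ : N × N → List Bool}
    (hs : IsoSpec D t' ψ) : t' = tr D := by
  ext v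
  rw [mem_tr]
  constructor
  · intro hv
    obtain ⟨p, hp⟩ := hs.2.2.1 v hv
    exact ⟨p, by rw [← uniq_wrd D hs p]; exact hp⟩
  · rintro ⟨p, rfl⟩
    rw [← uniq_wrd D hs p]
    exact hs.2.1 p

end DidHelp

/-- Every didendritic system with a finite label set is isomorphic, via a unique
isomorphism, to a unique leaf-labeled full binary tree. -/
theorem didendritic_finite_iso_tree {N : Type} [Fintype N] [Nonempty N]
    (D : DidendriticSystem N) :
    ∃! tψ : Finset (List Bool) × (N × N → List Bool), IsoSpec D tψ.1 tψ.2 := by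
  refine ⟨(DidHelp.tr D, DidHelp.wrd D), DidHelp.iso_exists D, ?_⟩
  rintro ⟨t', ψ⟩ hs
  have h1 : t' = DidHelp.tr D := DidHelp.uniq_tr D hs
  have h2 : ψ = DidHelp.wrd D := funext (DidHelp.uniq_wrd D hs)
  simp only [Prod.mk.injEq]
  exact ⟨h1, h2⟩
end
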